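/- arXiv:1511.00457 — 15 statements merged into one kernel-verified Lean document; each statement's English description precedes it below -/
import Mathlib

section
/- For any full [n]-tuple σ (an ordered partition of [n] into nonempty blocks) and any element x in the flippable set F(σ), the element x also belongs to F(F(σ,x)), and applying the flip operation twice returns σ: F(F(σ,x),x) = σ. -/
/-- A full `[n]`-tuple: an ordered partition of `Fin n` into pairwise disjoint
nonempty blocks covering everything. -/
def IsFullTuple (n : ℕ) (l : List (Finset (Fin n))) : Prop :=
  (∀ A ∈ l, A.Nonempty) ∧ l.Pairwise Disjoint ∧ l.foldr (· ∪ ·) ∅ = Finset.univ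

/-- The flippable set `F(σ)`: everything, unless the last block is a singleton,
in which case that singleton is excluded. -/
def flippable (n : ℕ) (l : List (Finset (Fin n))) : Finset (Fin n) :=
  match l.getLast? with
  | some A => if A.card = 1 then Finset.univ \ A else Finset.univ
  | none => Finset.univ

/-- The flip operation `F(σ, x)`: split `x` off from its block if that block has
at least two elements; otherwise merge the singleton block `{x}` into the next block. -/
def cflip {n : ℕ} (x : Fin n) : List (Finset (Fin n)) → List (Finset (Fin n))
  | [] => []
  | A :: rest =>
      if x ∈ A then
        if 2 ≤ A.card then {x} :: A.erase x :: rest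
        else
          match rest with
          | [] => A :: rest
          | B :: rest' => insert x B :: rest'
      else A :: cflip x rest

lemma mem_of_getLast?_aux {α : Type*} {l : List α} {a : α} (h : l.getLast? = some a) :
    a ∈ l := by
  obtain ⟨hne, rfl⟩ := List.mem_getLast?_eq_getLast h
  exact List.getLast_mem hne

/-- If `x` is not in the last block (if any), then `x` is flippable. -/
lemma mem_flippable_of_not_mem_last {n : ℕ} {l : List (Finset (Fin n))} {x : Fin n}
    (h : ∀ A, l.getLast? = some A → x ∉ A) : x ∈ flippable n l := by
  unfold flippable
  split
  next A hA =>
    split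
    · rw [Finset.mem_sdiff]
      exact ⟨Finset.mem_univ x, h A hA⟩
    · exact Finset.mem_univ x
  next => exact Finset.mem_univ x

lemma flippable_cons_cons (n : ℕ) (A B : Finset (Fin n)) (t : List (Finset (Fin n))) :
    flippable n (A :: B :: t) = flippable n (B :: t) := by
  unfold flippable
  rw [List.getLast?_cons_cons]

lemma cflip_cons_ne_nil {n : ℕ} (x : Fin n) (A : Finset (Fin n)) (t : List (Finset (Fin n))) :
    cflip x (A :: t) ≠ [] := by
  unfold cflip
  split
  · split
    · simp
    · split <;> simp
  · simp

lemma flip_aux {n : ℕ} (x : Fin n) :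
    ∀ l : List (Finset (Fin n)),
      (∀ A ∈ l, A.Nonempty) → l.Pairwise Disjoint →
      x ∈ l.foldr (· ∪ ·) ∅ → x ∈ flippable n l →
      x ∈ flippable n (cflip x l) ∧ cflip x (cflip x l) = l := by
  intro l
  induction l with
  | nil => intro _ _ hmem _; simp at hmem
  | cons A rest ih =>
      intro hne hdis hmem hx
      rw [List.pairwise_cons] at hdis
      obtain ⟨hdA, hdrest⟩ := hdis
      by_cases hxA : x ∈ A
      · -- x is not in any block of rest
        have hxrest : ∀ B ∈ rest, x ∉ B := fun B hB =>
          Finset.disjoint_left.mp (hdA B hB) hxA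
        by_cases hcard : 2 ≤ A.card
        · -- split off x from A
          have h1 : cflip x (A :: rest) = {x} :: A.erase x :: rest := by
            unfold cflip; rw [if_pos hxA, if_pos hcard]
          have h2 : cflip x ({x} :: A.erase x :: rest) = A :: rest := by
            unfold cflip
            rw [if_pos (Finset.mem_singleton_self x)]
            rw [if_neg (by simp)]
            simp [Finset.insert_erase hxA]
          refine ⟨?_, by rw [h1, h2]⟩
          rw [h1]
          apply mem_flippable_of_not_mem_last
          intro B hB
          rw [List.getLast?_cons_cons] at hB
          cases rest with
          | nil =>
              simp only [List.getLast?_singleton, Option.some.injEq] at hB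
              subst hB
              exact Finset.notMem_erase x A
          | cons C t =>
              rw [List.getLast?_cons_cons] at hB
              exact hxrest B (mem_of_getLast?_aux hB)
        · -- A = {x}; merge into next block
          have hAcard : A.card = 1 := by
            have := Finset.card_pos.mpr ⟨x, hxA⟩
            omega
          have hA : A = {x} := by
            obtain ⟨a, ha⟩ := Finset.card_eq_one.mp hAcard
            rw [ha] at hxA ⊢
            rw [Finset.mem_singleton] at hxA
            rw [hxA]
          cases rest with
          | nil =>
              -- contradiction: last block is the singleton {x} containing x
              exfalso
              have : x ∉ flippable n [A] := by
                unfold flippable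
                simp [hAcard, hxA]
              exact this hx
          | cons B rest' =>
              have hxB : x ∉ B := hxrest B List.mem_cons_self
              have hBne : B.Nonempty := hne B (by simp)
              have hcard2 : 2 ≤ (insert x B).card := by
                rw [Finset.card_insert_of_notMem hxB]
                have := Finset.card_pos.mpr hBne
                omega
              have h1 : cflip x (A :: B :: rest') = insert x B :: rest' := by
                unfold cflip; rw [if_pos hxA, if_neg hcard]
              have h2 : cflip x (insert x B :: rest') = A :: B :: rest' := by
                unfold cflip
                rw [if_pos (Finset.mem_insert_self x B), if_pos hcard2]
                rw [Finset.erase_insert hxB, hA]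
              refine ⟨?_, by rw [h1, h2]⟩
              rw [h1]
              cases rest' with
              | nil =>
                  unfold flippable
                  simp only [List.getLast?_singleton]
                  rw [if_neg (by omega)]
                  exact Finset.mem_univ x
              | cons C t =>
                  apply mem_flippable_of_not_mem_last
                  intro D hD
                  rw [List.getLast?_cons_cons] at hD
                  exact hxrest D (List.mem_cons_of_mem B (mem_of_getLast?_aux hD))
      · -- x not in A: recurse
        have h1 : cflip x (A :: rest) = A :: cflip x rest := by
          rw [cflip.eq_def]
          simp only []
          rw [if_neg hxA]
        have hmem' : x ∈ rest.foldr (· ∪ ·) ∅ := by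
          simp only [List.foldr_cons, Finset.mem_union] at hmem
          exact hmem.resolve_left hxA
        cases rest with
        | nil => simp at hmem'
        | cons B t =>
            have hx' : x ∈ flippable n (B :: t) := by
              rw [← flippable_cons_cons n A B t]; exact hx
            obtain ⟨ih1, ih2⟩ := ih (fun C hC => hne C (List.mem_cons_of_mem A hC))
              hdrest hmem' hx'
            constructor
            · rw [h1]
              obtain ⟨E, s, hEs⟩ : ∃ E s, cflip x (B :: t) = E :: s :=
                match hcf : cflip x (B :: t), cflip_cons_ne_nil x B t with
                | E :: s, _ => ⟨E, s, rfl⟩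
              rw [hEs, flippable_cons_cons]
              rw [hEs] at ih1
              exact ih1
            · rw [h1]
              have h3 : cflip x (A :: cflip x (B :: t)) = A :: cflip x (cflip x (B :: t)) := by
                rw [cflip.eq_def]
                simp only []
                rw [if_neg hxA]
              rw [h3, ih2]

/-- For any full `[n]`-tuple `σ` and `x ∈ F(σ)`, we have `x ∈ F(F(σ,x))` and
`F(F(σ,x),x) = σ`. -/
theorem flip_involutive (n : ℕ) (l : List (Finset (Fin n))) (x : Fin n)
    (hl : IsFullTuple n l) (hx : x ∈ flippable n l) :
    x ∈ flippable n (cflip x l) ∧ cflip x (cflip x l) = l := by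
  obtain ⟨h1, h2, h3⟩ := hl
  exact flip_aux x l h1 h2 (h3 ▸ Finset.mem_univ x) hx
end

section
/- Assigning to each edge of the flip graph Γ_n its flip element yields a well-defined proper edge coloring: adjacent edges of Γ_n receive different colors, and the color of an edge does not depend on which endpoint is used to compute it. -/
lemma mem_union_foldr {n : ℕ} {l : List (Finset (Fin n))} {x : Fin n} :
    x ∈ l.foldr (· ∪ ·) ∅ ↔ ∃ A ∈ l, x ∈ A := by
  induction l with
  | nil => simp
  | cons A rest ih => simp [ih]

lemma flippable_cons {n : ℕ} {A B : Finset (Fin n)} {rest : List (Finset (Fin n))} :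
    flippable n (A :: B :: rest) = flippable n (B :: rest) := by
  unfold flippable
  rw [List.getLast?_cons_cons]

lemma flippable_singleton {n : ℕ} {A : Finset (Fin n)} :
    flippable n [A] = if A.card = 1 then Finset.univ \ A else Finset.univ := rfl

lemma cflip_ne_nil {n : ℕ} {x : Fin n} {A : Finset (Fin n)} {rest : List (Finset (Fin n))} :
    cflip x (A :: rest) ≠ [] := by
  unfold cflip
  split_ifs with h1 h2
  · simp
  · cases rest <;> simp
  · simp

lemma singleton_of_card_le {n : ℕ} {A : Finset (Fin n)} {x : Fin n}
    (hx : x ∈ A) (h : ¬ 2 ≤ A.card) : A = {x} := by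
  have h1 : A.card = 1 := by
    have := Finset.card_pos.mpr ⟨x, hx⟩
    omega
  obtain ⟨a, ha⟩ := Finset.card_eq_one.mp h1
  subst ha
  simp only [Finset.mem_singleton] at hx
  subst hx; rfl

-- injectivity (part 1, generalized)
lemma cflip_inj {n : ℕ} : ∀ (l : List (Finset (Fin n))),
    (∀ A ∈ l, A.Nonempty) → l.Pairwise Disjoint →
    ∀ x y : Fin n, x ∈ l.foldr (· ∪ ·) ∅ → y ∈ l.foldr (· ∪ ·) ∅ →
    x ∈ flippable n l → y ∈ flippable n l → cflip x l = cflip y l → x = y := by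
  intro l
  induction l with
  | nil => intro _ _ x y hx; simp at hx
  | cons A rest ih =>
    intro hne hdis x y hxu hyu hxf hyf heq
    have hAne : A.Nonempty := hne A (by simp)
    have hdisA : ∀ B ∈ rest, Disjoint A B := (List.pairwise_cons.mp hdis).1
    -- key asymmetric case
    have key : ∀ u v : Fin n, v ∈ (A :: rest).foldr (· ∪ ·) ∅ → u ∈ flippable n (A :: rest) →
        u ∈ A → v ∉ A → cflip u (A :: rest) = cflip v (A :: rest) → False := by
      intro u v hvu huf huA hvA he
      rw [show cflip v (A :: rest) = A :: cflip v rest by simp [cflip, hvA]] at he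
      by_cases hcard : 2 ≤ A.card
      · simp only [cflip, if_pos huA, if_pos hcard] at he
        have h1 : ({u} : Finset (Fin n)) = A := by injection he
        rw [← h1] at hcard; simp at hcard
      · have hAs : A = {u} := singleton_of_card_le huA hcard
        simp only [cflip, if_pos huA, if_neg hcard] at he
        cases rest with
        | nil =>
          simp only [List.foldr] at hvu
          rw [Finset.union_empty] at hvu
          exact hvA hvu
        | cons B rest' =>
          have h1 : insert u B = A := by injection he
          have hBne : B.Nonempty := hne B (by simp)
          have hd : Disjoint A B := hdisA B (by simp)
          obtain ⟨b, hb⟩ := hBne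
          have hbA : b ∈ A := by rw [← h1]; exact Finset.mem_insert_of_mem hb
          exact (Finset.disjoint_left.mp hd hbA) hb
    by_cases hxA : x ∈ A <;> by_cases hyA : y ∈ A
    · -- both in A
      by_cases hcard : 2 ≤ A.card
      · simp only [cflip, if_pos hxA, if_pos hyA, if_pos hcard] at heq
        have : ({x} : Finset (Fin n)) = {y} := by injection heq
        simpa [Finset.singleton_inj] using this
      · have hx' := singleton_of_card_le hxA hcard
        have hy' := singleton_of_card_le hyA hcard
        rw [hx'] at hy'
        exact Finset.singleton_inj.mp hy'
    · exact absurd heq (fun h => key x y hyu hxf hxA hyA h)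
    · exact absurd heq.symm (fun h => key y x hxu hyf hyA hxA h)
    · -- both not in A
      simp only [cflip, if_neg hxA, if_neg hyA, List.cons.injEq, true_and] at heq
      cases rest with
      | nil =>
        simp only [List.foldr] at hxu
        rw [Finset.union_empty] at hxu
        exact absurd hxu hxA
      | cons B rest' =>
        have hxu' : x ∈ (B :: rest').foldr (· ∪ ·) ∅ := by
          simp only [List.foldr, Finset.mem_union] at hxu ⊢
          tauto
        have hyu' : y ∈ (B :: rest').foldr (· ∪ ·) ∅ := by
          simp only [List.foldr, Finset.mem_union] at hyu ⊢
          tauto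
        exact ih (fun C hC => hne C (by simp [hC])) (List.pairwise_cons.mp hdis).2
          x y hxu' hyu' (flippable_cons ▸ hxf) (flippable_cons ▸ hyf) heq

-- involution
lemma cflip_cflip {n : ℕ} (x : Fin n) : ∀ (l : List (Finset (Fin n))),
    (∀ A ∈ l, A.Nonempty) → l.Pairwise Disjoint → cflip x (cflip x l) = l := by
  intro l
  induction l with
  | nil => intro _ _; rfl
  | cons A rest ih =>
    intro hne hdis
    by_cases hxA : x ∈ A
    · by_cases hcard : 2 ≤ A.card
      · rw [show cflip x (A :: rest) = {x} :: A.erase x :: rest by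
          simp [cflip, hxA, hcard]]
        have h1 : ¬ 2 ≤ ({x} : Finset (Fin n)).card := by simp
        simp only [cflip, Finset.mem_singleton, if_pos rfl, if_neg h1, if_true]
        rw [Finset.insert_erase hxA]
      · have hAs : A = {x} := singleton_of_card_le hxA hcard
        cases rest with
        | nil => simp [cflip, hxA, hcard]
        | cons B rest' =>
          rw [show cflip x (A :: B :: rest') = insert x B :: rest' by
            simp [cflip, hxA, hcard]]
          have hBne : B.Nonempty := hne B (by simp)
          have hd : Disjoint A B := (List.pairwise_cons.mp hdis).1 B (by simp)
          have hxB : x ∉ B := Finset.disjoint_left.mp hd hxA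
          have hc2 : 2 ≤ (insert x B).card := by
            rw [Finset.card_insert_of_notMem hxB]
            have := Finset.card_pos.mpr hBne
            omega
          simp only [cflip, Finset.mem_insert, true_or, if_true, if_pos hc2]
          rw [Finset.erase_insert hxB, hAs]
    · rw [show cflip x (A :: rest) = A :: cflip x rest by simp [cflip, hxA]]
      rw [show cflip x (A :: cflip x rest) = A :: cflip x (cflip x rest) by
        simp [cflip, hxA]]
      rw [ih (fun C hC => hne C (by simp [hC])) (List.pairwise_cons.mp hdis).2]

-- flippability is preserved
lemma mem_flippable_cflip {n : ℕ} (x : Fin n) : ∀ (l : List (Finset (Fin n))),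
    (∀ A ∈ l, A.Nonempty) → l.Pairwise Disjoint →
    x ∈ flippable n l → x ∈ flippable n (cflip x l) := by
  intro l
  induction l with
  | nil => intro _ _ h; exact h
  | cons A rest ih =>
    intro hne hdis hxf
    by_cases hxA : x ∈ A
    · by_cases hcard : 2 ≤ A.card
      · rw [show cflip x (A :: rest) = {x} :: A.erase x :: rest by
          simp [cflip, hxA, hcard]]
        cases rest with
        | nil =>
          rw [flippable_cons, flippable_singleton]
          split_ifs with h
          · simp [Finset.mem_sdiff]
          · simp
        | cons B rest' =>
          rw [flippable_cons, flippable_cons]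
          rw [flippable_cons] at hxf
          exact hxf
      · have hAs : A = {x} := singleton_of_card_le hxA hcard
        cases rest with
        | nil =>
          rw [hAs, flippable_singleton] at hxf
          simp at hxf
        | cons B rest' =>
          rw [show cflip x (A :: B :: rest') = insert x B :: rest' by
            simp [cflip, hxA, hcard]]
          cases rest' with
          | nil =>
            have hBne : B.Nonempty := hne B (by simp)
            have hd : Disjoint A B := (List.pairwise_cons.mp hdis).1 B (by simp)
            have hxB : x ∉ B := Finset.disjoint_left.mp hd hxA
            have hc2 : (insert x B).card ≠ 1 := by
              rw [Finset.card_insert_of_notMem hxB]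
              have := Finset.card_pos.mpr hBne
              omega
            rw [flippable_singleton, if_neg hc2]
            simp
          | cons D r =>
            rw [flippable_cons]
            rw [flippable_cons, flippable_cons] at hxf
            exact hxf
    · rw [show cflip x (A :: rest) = A :: cflip x rest by simp [cflip, hxA]]
      cases rest with
      | nil =>
        rw [show cflip x ([] : List (Finset (Fin n))) = [] from rfl,
          flippable_singleton]
        split_ifs with h
        · simp [Finset.mem_sdiff, hxA]
        · simp
      | cons B rest' =>
        have hx' : x ∈ flippable n (cflip x (B :: rest')) :=
          ih (fun C hC => hne C (by simp [hC])) (List.pairwise_cons.mp hdis).2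
            (flippable_cons ▸ hxf)
        cases hc : cflip x (B :: rest') with
        | nil => exact absurd hc cflip_ne_nil
        | cons C cr =>
          rw [hc] at hx'
          rw [flippable_cons]
          exact hx'


/-- Assigning to each edge of the flip graph `Γ_n` its flip element is a
well-defined proper edge coloring: (1) the color of an edge does not depend on
which endpoint one uses to compute it (if `τ = F(σ,x)` and `σ = F(τ,y)` then
`x = y`), and (2) distinct flips at a common vertex yield distinct edges, so any
two distinct edges sharing a vertex receive distinct colors. -/
theorem flip_edge_coloring (n : ℕ) (σ : List (Finset (Fin n))) (hσ : IsFullTuple n σ) :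
    (∀ x ∈ flippable n σ, ∀ y ∈ flippable n σ, cflip x σ = cflip y σ → x = y) ∧
    (∀ τ : List (Finset (Fin n)), IsFullTuple n τ →
      ∀ x ∈ flippable n σ, ∀ y ∈ flippable n τ,
        cflip x σ = τ → cflip y τ = σ → x = y) := by
  obtain ⟨hne, hdis, huniv⟩ := hσ
  constructor
  · intro x hx y hy h
    exact cflip_inj σ hne hdis x y (by rw [huniv]; exact Finset.mem_univ x)
      (by rw [huniv]; exact Finset.mem_univ y) hx hy h
  · intro τ hτ x hx y hy hxτ hyτ
    obtain ⟨hne', hdis', huniv'⟩ := hτ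
    have hx' : x ∈ flippable n τ := hxτ ▸ mem_flippable_cflip x σ hne hdis hx
    have hxx : cflip x τ = σ := by rw [← hxτ]; exact cflip_cflip x σ hne hdis
    exact cflip_inj τ hne' hdis' x y (by rw [huniv']; exact Finset.mem_univ x)
      (by rw [huniv']; exact Finset.mem_univ y) hx' hy (hxx.trans hyτ.symm)
end

section
/- Let σ be a full [n]-tuple, V ⊆ [n], and x ∈ F(σ) with x ∉ V. Then the V-prefix is invariant under the flip with respect to x: Pr_V(σ) = Pr_V(F(σ,x)). -/
/-- The `V`-prefix of a tuple: the maximal initial segment of blocks each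
contained in `V`. -/
def prefV {n : ℕ} (V : Finset (Fin n)) (l : List (Finset (Fin n))) :
    List (Finset (Fin n)) :=
  l.takeWhile fun A => decide (A ⊆ V)


lemma prefV_flip_aux (n : ℕ) (V : Finset (Fin n)) (x : Fin n) (hxV : x ∉ V) :
    ∀ l : List (Finset (Fin n)), (∀ A ∈ l, A.Nonempty) →
      prefV V l = prefV V (cflip x l)
  | [] , _ => rfl
  | A :: rest, hne => by
    have hAne : A.Nonempty := hne A (by simp)
    by_cases hxA : x ∈ A
    · have hAV : ¬ A ⊆ V := fun h => hxV (h hxA)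
      by_cases h2 : 2 ≤ A.card
      · have hx2 : ¬ ({x} : Finset (Fin n)) ⊆ V := by
          simp [Finset.singleton_subset_iff, hxV]
        simp [cflip, hxA, h2, prefV, List.takeWhile, hAV, hx2]
      · match rest with
        | [] => simp [cflip, hxA, h2]
        | B :: rest' =>
          have hB : ¬ insert x B ⊆ V := fun h => hxV (h (Finset.mem_insert_self x B))
          simp [cflip, hxA, h2, prefV, List.takeWhile, hAV, hB]
    · have ih := prefV_flip_aux n V x hxV rest (fun A hA => hne A (by simp [hA]))
      by_cases hAV : A ⊆ V
      · simp [cflip, hxA, prefV, List.takeWhile, hAV] at ih ⊢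
        exact ih
      · simp [cflip, hxA, prefV, List.takeWhile, hAV]

/-- Flipping with respect to an element `x ∉ V` does not change the `V`-prefix. -/
theorem prefV_flip (n : ℕ) (V : Finset (Fin n)) (l : List (Finset (Fin n)))
    (x : Fin n) (hl : IsFullTuple n l) (hx : x ∈ flippable n l) (hxV : x ∉ V) :
    prefV V l = prefV V (cflip x l) := by
  exact prefV_flip_aux n V x hxV l hl.1
end

section
/- Let V ⊆ [n] and let R=(x_1,...,x_d) be an order on [n]\V. The standard matching μ_R, defined by μ_R(σ) := F(σ, x_h) when h := h_R(σ) ≠ 0 and undefined otherwise, is a well-defined partial matching on the vertices of Γ_n: when defined, σ and μ_R(σ) are adjacent in Γ_n, μ_R(μ_R(σ)) is defined and equals σ, and moreover Pr_V(σ) = Pr_V(μ_R(σ)) and h_R(σ) = h_R(μ_R(σ)). -/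
/-- Auxiliary function, operating on the reversed order `R` and the reversed
tuple: returns the element `x_h` where `h` is the height (the first element of
`R`, read from the end, at which the tuple stops matching the suffix of
singletons `{x_{h+1}}|...|{x_d}`), or `none` if the height is `0`. -/
def heightElemRev {n : ℕ} : List (Fin n) → List (Finset (Fin n)) → Option (Fin n)
  | [], _ => none
  | x :: _, [] => some x
  | x :: xs, A :: As => if A = {x} then heightElemRev xs As else some x

/-- For an order `R = (x_1,...,x_d)` and a tuple `σ`, `heightElem R σ` is the
element `x_h` with `h = h_R(σ)` when `h_R(σ) ≠ 0`, and `none` when `h_R(σ) = 0`.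
The standard matching `μ_R` sends `σ` to `F(σ, heightElem R σ)`. -/
def heightElem {n : ℕ} (R : List (Fin n)) (l : List (Finset (Fin n))) :
    Option (Fin n) :=
  heightElemRev R.reverse l.reverse


namespace SMaux
variable {n : ℕ}

lemma mem_foldr_union (x : Fin n) :
    ∀ (l : List (Finset (Fin n))) (init : Finset (Fin n)),
      x ∈ l.foldr (· ∪ ·) init ↔ x ∈ init ∨ ∃ A ∈ l, x ∈ A
  | [], init => by simp
  | A :: l, init => by
      simp only [List.foldr_cons, Finset.mem_union, mem_foldr_union x l init, List.mem_cons]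
      constructor
      · rintro (h | h | ⟨B, hB, hxB⟩)
        · exact Or.inr ⟨A, Or.inl rfl, h⟩
        · exact Or.inl h
        · exact Or.inr ⟨B, Or.inr hB, hxB⟩
      · rintro (h | ⟨B, (rfl | hB), hxB⟩)
        · exact Or.inr (Or.inl h)
        · exact Or.inl hxB
        · exact Or.inr (Or.inr ⟨B, hB, hxB⟩)

lemma takeWhile_append_stop {α} (p : α → Bool) (a : α) (ha : p a = false) :
    ∀ (m₁ r : List α), (m₁ ++ a :: r).takeWhile p = m₁.takeWhile p
  | [], r => by simp [List.takeWhile_cons, ha]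
  | b :: m₁, r => by
      by_cases hb : p b <;>
        simp [List.takeWhile_cons, hb, takeWhile_append_stop p a ha m₁ r]

lemma hrev_struct :
    ∀ (xs : List (Fin n)) (As : List (Finset (Fin n))) (x : Fin n),
      heightElemRev xs As = some x →
      ∃ p xs', xs = p ++ x :: xs' ∧
        (As = p.map (fun y => ({y} : Finset (Fin n))) ∨
         ∃ A As', As = p.map (fun y => ({y} : Finset (Fin n))) ++ A :: As' ∧ A ≠ {x})
  | [], As, x => by simp [heightElemRev]
  | x₀ :: xs, [], x => by
      intro h
      simp only [heightElemRev, Option.some.injEq] at h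
      exact ⟨[], xs, by simp [h], Or.inl rfl⟩
  | x₀ :: xs, A :: As, x => by
      intro h
      by_cases hA : A = {x₀}
      · simp only [heightElemRev, if_pos hA] at h
        obtain ⟨p, xs', h1, h2⟩ := hrev_struct xs As x h
        refine ⟨x₀ :: p, xs', by simp [h1], ?_⟩
        rcases h2 with h2 | ⟨A', As'', h2, h3⟩
        · exact Or.inl (by simp [hA, h2])
        · exact Or.inr ⟨A', As'', by simp [hA, h2], h3⟩
      · simp only [heightElemRev, if_neg hA, Option.some.injEq] at h
        subst h
        exact ⟨[], xs, rfl, Or.inr ⟨A, As, rfl, hA⟩⟩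

lemma hrev_build :
    ∀ (p : List (Fin n)) (x : Fin n) (xs' : List (Fin n)) (A : Finset (Fin n))
      (rest : List (Finset (Fin n))), A ≠ {x} →
      heightElemRev (p ++ x :: xs')
        (p.map (fun y => ({y} : Finset (Fin n))) ++ A :: rest) = some x
  | [], x, xs', A, rest, hA => by simp [heightElemRev, hA]
  | y :: p, x, xs', A, rest, hA => by
      simp only [List.cons_append, List.map_cons, heightElemRev, if_pos rfl]
      exact hrev_build p x xs' A rest hA

lemma hrev_eq' (p xs' : List (Fin n)) (x : Fin n) (front : List (Finset (Fin n)))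
    (L : Finset (Fin n)) (hL : front.getLast? = some L) (hne : L ≠ {x}) :
    heightElemRev (p ++ x :: xs')
      (p.map (fun y => ({y} : Finset (Fin n))) ++ front.reverse) = some x := by
  rcases List.eq_nil_or_concat front with rfl | ⟨t, c, rfl⟩
  · simp at hL
  · rw [List.concat_eq_append] at hL ⊢
    rw [List.getLast?_concat] at hL
    obtain rfl : c = L := by injection hL
    rw [List.reverse_append, List.reverse_singleton, List.singleton_append]
    exact hrev_build p x xs' _ _ hne

lemma find_first (x : Fin n) :
    ∀ (m : List (Finset (Fin n))), (∃ A ∈ m, x ∈ A) →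
      ∃ m₁ B m₂, m = m₁ ++ B :: m₂ ∧ x ∈ B ∧ ∀ C ∈ m₁, x ∉ C
  | [], h => by simp at h
  | A :: m, h => by
      by_cases hA : x ∈ A
      · exact ⟨[], A, m, rfl, hA, by simp⟩
      · have h' : ∃ B ∈ m, x ∈ B := by
          rcases h with ⟨B, hB, hxB⟩
          rcases List.mem_cons.mp hB with rfl | hB
          · exact absurd hxB hA
          · exact ⟨B, hB, hxB⟩
        obtain ⟨m₁, B, m₂, h1, h2, h3⟩ := find_first x m h'
        refine ⟨A :: m₁, B, m₂, by simp [h1], h2, ?_⟩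
        intro C hC
        rcases List.mem_cons.mp hC with rfl | hC
        · exact hA
        · exact h3 C hC

lemma cflip_append (x : Fin n) :
    ∀ (m₁ r : List (Finset (Fin n))), (∀ C ∈ m₁, x ∉ C) →
      cflip x (m₁ ++ r) = m₁ ++ cflip x r
  | [], r, _ => rfl
  | C :: m₁, r, h => by
      have hx : x ∉ C := h C (by simp)
      simp only [List.cons_append, cflip, if_neg hx]
      rw [
        cflip_append x m₁ r (fun D hD => h D (by simp [hD]))]

lemma cflip_split (x : Fin n) (B : Finset (Fin n)) (r : List (Finset (Fin n)))
    (hx : x ∈ B) (hc : 2 ≤ B.card) :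
    cflip x (B :: r) = {x} :: B.erase x :: r := by
  simp [cflip, hx, hc]

lemma cflip_merge (x : Fin n) (C : Finset (Fin n)) (r : List (Finset (Fin n))) :
    cflip x ({x} :: C :: r) = insert x C :: r := by
  simp [cflip]

lemma mem_flippable {x : Fin n} {l : List (Finset (Fin n))} {L : Finset (Fin n)}
    (hL : l.getLast? = some L) (hne : L ≠ {x}) : x ∈ flippable n l := by
  unfold flippable
  rw [hL]
  by_cases hc : L.card = 1
  · obtain ⟨a, rfl⟩ := Finset.card_eq_one.mp hc
    simp only [if_pos hc, Finset.mem_sdiff, Finset.mem_univ, true_and,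
      Finset.mem_singleton]
    intro h
    exact hne (by rw [h])
  · simp [if_neg hc]

lemma getLast?_cons_append {α} (l₁ : List α) (a : α) (l₂ : List α) :
    (l₁ ++ a :: l₂).getLast? = (a :: l₂).getLast? := by
  obtain ⟨b, hb⟩ : ∃ b, (a :: l₂).getLast? = some b :=
    ⟨(a :: l₂).getLast (by simp), List.getLast?_eq_getLast (by simp)⟩
  rw [List.getLast?_append, hb]; rfl

lemma getLast?_ne {α} (a a' b : α) (m₂ : List α) {L : α}
    (h : (a :: m₂).getLast? = some L) (hL : L ≠ b) (ha' : a' ≠ b) :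
    ∃ L', (a' :: m₂).getLast? = some L' ∧ L' ≠ b := by
  cases m₂ with
  | nil => exact ⟨a', rfl, ha'⟩
  | cons c t =>
      rw [List.getLast?_cons_cons] at h ⊢
      exact ⟨L, h, hL⟩

end SMaux

/-- The standard matching `μ_R` associated to an order `R` on `[n] \ V` is a
well-defined partial matching on the vertices of `Γ_n`: when `h_R(σ) ≠ 0` (i.e.
when `heightElem` returns some element `x_h`), the vertex `σ` is adjacent to
`μ_R(σ) = F(σ,x_h)` in `Γ_n`; `μ_R(μ_R(σ))` is defined, uses the same flip
element, and equals `σ`; moreover `Pr_V` and `h_R` are preserved by `μ_R`. -/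
theorem standard_matching_well_defined (n : ℕ) (V : Finset (Fin n))
    (R : List (Fin n)) (hnd : R.Nodup) (hR : ∀ x : Fin n, x ∈ R ↔ x ∉ V)
    (l : List (Finset (Fin n))) (hl : IsFullTuple n l)
    (xh : Fin n) (hh : heightElem R l = some xh) :
    xh ∈ flippable n l ∧
    heightElem R (cflip xh l) = some xh ∧
    cflip xh (cflip xh l) = l ∧
    prefV V (cflip xh l) = prefV V l := by
  classical
  obtain ⟨hblk, hdisj, hcov⟩ := hl
  obtain ⟨p, xs', hxs, hAs⟩ := SMaux.hrev_struct R.reverse l.reverse xh hh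
  have hndr : (p ++ xh :: xs').Nodup := hxs ▸ (List.nodup_reverse.mpr hnd)
  have hxp : xh ∉ p := fun h =>
    (List.disjoint_of_nodup_append hndr) h (by simp)
  have hxR : xh ∈ R := by
    have : xh ∈ R.reverse := by rw [hxs]; simp
    simpa using this
  have hxV : xh ∉ V := (hR xh).mp hxR
  rcases hAs with hAs | ⟨A, As', hAs, hA⟩
  · exfalso
    have hxl : ∃ A ∈ l, xh ∈ A := by
      have hx : xh ∈ l.foldr (· ∪ ·) ∅ := by rw [hcov]; exact Finset.mem_univ xh
      rcases (SMaux.mem_foldr_union xh l ∅).mp hx with h | h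
      · simp at h
      · exact h
    obtain ⟨A0, hA0l, hxA0⟩ := hxl
    have hmem : A0 ∈ l.reverse := List.mem_reverse.mpr hA0l
    rw [hAs] at hmem
    obtain ⟨y, hy, rfl⟩ := List.mem_map.mp hmem
    have : xh = y := Finset.mem_singleton.mp hxA0
    exact hxp (this ▸ hy)
  · -- main case
    have hl_eq : l = (As'.reverse ++ [A]) ++
        (p.map (fun y => ({y} : Finset (Fin n)))).reverse := by
      rw [← List.reverse_reverse l, hAs, List.reverse_append, List.reverse_cons]
    set tl : List (Finset (Fin n)) :=
      (p.map (fun y => ({y} : Finset (Fin n)))).reverse with htl_def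
    have htl : ∀ C ∈ tl, xh ∉ C := by
      intro C hC
      obtain ⟨y, hy, rfl⟩ := List.mem_map.mp (List.mem_reverse.mp hC)
      intro hmem
      exact hxp ((Finset.mem_singleton.mp hmem) ▸ hy)
    have hxm : ∃ B ∈ As'.reverse ++ [A], xh ∈ B := by
      have hx : xh ∈ l.foldr (· ∪ ·) ∅ := by rw [hcov]; exact Finset.mem_univ xh
      rcases (SMaux.mem_foldr_union xh l ∅).mp hx with h | h
      · simp at h
      · obtain ⟨B, hBl, hxB⟩ := h
        rw [hl_eq] at hBl
        rcases List.mem_append.mp hBl with hB | hB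
        · exact ⟨B, hB, hxB⟩
        · exact absurd hxB (htl B hB)
    obtain ⟨m₁, B, m₂, hm, hxB, hm₁⟩ := SMaux.find_first xh _ hxm
    have hl' : l = m₁ ++ (B :: (m₂ ++ tl)) := by
      rw [hl_eq, hm, List.append_assoc]; rfl
    have hBm₂A : (B :: m₂).getLast? = some A := by
      have h2 : (As'.reverse ++ [A]).getLast? = some A := List.getLast?_concat
      rw [hm, SMaux.getLast?_cons_append] at h2
      exact h2
    -- flippable
    have hLlast : ∃ L, l.getLast? = some L ∧ L ≠ {xh} := by
      rcases List.eq_nil_or_concat tl with htl0 | ⟨t, c, htlc⟩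
      · refine ⟨A, ?_, hA⟩
        rw [hl_eq, htl0, List.append_nil]
        exact List.getLast?_concat
      · have hc : c ∈ tl := by rw [htlc]; simp
        obtain ⟨y, hy, rfl⟩ := List.mem_map.mp (List.mem_reverse.mp hc)
        refine ⟨{y}, ?_, ?_⟩
        · rw [hl_eq, htlc, List.concat_eq_append, ← List.append_assoc]
          exact List.getLast?_concat
        · intro h
          exact hxp ((Finset.singleton_injective h) ▸ hy)
    obtain ⟨L, hLl, hLne⟩ := hLlast
    have hflip : xh ∈ flippable n l := SMaux.mem_flippable hLl hLne
    have hqxh : (fun A => decide (A ⊆ V)) ({xh} : Finset (Fin n)) = false := by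
      simp [Finset.singleton_subset_iff, hxV]
    have hqB : (fun A => decide (A ⊆ V)) B = false := by
      simp only [decide_eq_false_iff_not]
      intro hBB
      exact hxV (hBB hxB)
    by_cases hc : 2 ≤ B.card
    · -- split case
      have hxe : xh ∉ B.erase xh := Finset.notMem_erase _ _
      have heB : B.erase xh ≠ {xh} := fun h => hxe (h ▸ Finset.mem_singleton_self xh)
      have hσ : cflip xh l = m₁ ++ (({xh} : Finset (Fin n)) ::
          (B.erase xh :: (m₂ ++ tl))) := by
        rw [hl', SMaux.cflip_append xh m₁ _ hm₁, SMaux.cflip_split xh B _ hxB hc]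
      refine ⟨hflip, ?_, ?_, ?_⟩
      · -- height preserved
        show heightElemRev R.reverse (cflip xh l).reverse = some xh
        have hσ2 : cflip xh l = (m₁ ++ (({xh} : Finset (Fin n)) ::
            (B.erase xh :: m₂))) ++ tl := by
          rw [hσ, List.append_assoc]; rfl
        obtain ⟨L', hL'1, hL'2⟩ := SMaux.getLast?_ne B (B.erase xh) ({xh} : Finset (Fin n))
          m₂ hBm₂A hA heB
        have hfr : (m₁ ++ (({xh} : Finset (Fin n)) :: (B.erase xh :: m₂))).getLast?
            = some L' := by
          rw [SMaux.getLast?_cons_append, List.getLast?_cons_cons, hL'1]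
        rw [hσ2, List.reverse_append, htl_def, List.reverse_reverse, hxs]
        exact SMaux.hrev_eq' p xs' xh _ L' hfr hL'2
      · -- involution
        rw [hσ, SMaux.cflip_append xh m₁ _ hm₁, SMaux.cflip_merge,
          Finset.insert_erase hxB, ← hl']
      · -- prefV
        show List.takeWhile _ _ = List.takeWhile _ _
        rw [hσ, SMaux.takeWhile_append_stop (fun A => decide (A ⊆ V))
            ({xh} : Finset (Fin n)) hqxh m₁ (B.erase xh :: (m₂ ++ tl)), hl',
          SMaux.takeWhile_append_stop (fun A => decide (A ⊆ V)) B hqB m₁ (m₂ ++ tl)]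
    · -- merge case
      have hB1 : B = {xh} := by
        have hc1 : B.card = 1 :=
          le_antisymm (by omega) (Finset.one_le_card.mpr ⟨xh, hxB⟩)
        obtain ⟨a, ha⟩ := Finset.card_eq_one.mp hc1
        rw [ha] at hxB ⊢
        rw [Finset.mem_singleton.mp hxB]
      cases m₂ with
      | nil =>
          exfalso
          have : B = A := by injection hBm₂A
          exact hA (this ▸ hB1)
      | cons C m₂' =>
          have hpair : (B :: (C :: (m₂' ++ tl))).Pairwise Disjoint := by
            have := hl' ▸ hdisj
            exact (List.pairwise_append.mp this).2.1
          have hdBC : Disjoint B C :=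
            (List.pairwise_cons.mp hpair).1 C (by simp)
          have hxC : xh ∉ C := Finset.disjoint_left.mp hdBC hxB
          have hCne : C.Nonempty := hblk C (by rw [hl']; simp)
          have hins : insert xh C ≠ {xh} := by
            obtain ⟨y, hy⟩ := hCne
            intro h
            have hyi : y ∈ insert xh C := Finset.mem_insert_of_mem hy
            rw [h, Finset.mem_singleton] at hyi
            exact hxC (hyi ▸ hy)
          have hicard : 2 ≤ (insert xh C).card := by
            rw [Finset.card_insert_of_notMem hxC]
            have := Finset.one_le_card.mpr hCne
            omega
          have hσ : cflip xh l = m₁ ++ (insert xh C :: (m₂' ++ tl)) := by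
            rw [hl', SMaux.cflip_append xh m₁ _ hm₁, hB1, List.cons_append,
              SMaux.cflip_merge]
          refine ⟨hflip, ?_, ?_, ?_⟩
          · show heightElemRev R.reverse (cflip xh l).reverse = some xh
            have hσ2 : cflip xh l = (m₁ ++ (insert xh C :: m₂')) ++ tl := by
              rw [hσ, List.append_assoc]; rfl
            have hCA : (C :: m₂').getLast? = some A := by
              rw [← List.getLast?_cons_cons (a := B), hBm₂A]
            obtain ⟨L', hL'1, hL'2⟩ := SMaux.getLast?_ne C (insert xh C)
              ({xh} : Finset (Fin n)) m₂' hCA hA hins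
            have hfr : (m₁ ++ (insert xh C :: m₂')).getLast? = some L' := by
              rw [SMaux.getLast?_cons_append, hL'1]
            rw [hσ2, List.reverse_append, htl_def, List.reverse_reverse, hxs]
            exact SMaux.hrev_eq' p xs' xh _ L' hfr hL'2
          · rw [hσ, SMaux.cflip_append xh m₁ _ hm₁,
              SMaux.cflip_split xh _ _ (Finset.mem_insert_self xh C) hicard,
              Finset.erase_insert hxC, ← hB1]
            exact hl'.symm
          · show List.takeWhile _ _ = List.takeWhile _ _
            have hqi : (fun A => decide (A ⊆ V)) (insert xh C) = false := by
              simp only [decide_eq_false_iff_not]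
              intro hBB
              exact hxV (hBB (Finset.mem_insert_self xh C))
            rw [hσ, SMaux.takeWhile_append_stop (fun A => decide (A ⊆ V))
                (insert xh C) hqi m₁ (m₂' ++ tl), hl',
              SMaux.takeWhile_append_stop (fun A => decide (A ⊆ V)) B hqB m₁
                (C :: m₂' ++ tl)]
end

section
/- For any order R = (x_1,...,x_n) on the whole set [n], the standard matching μ_R on the flip graph Γ_n is near-perfect: it has exactly one critical (unmatched) vertex, namely the full [n]-tuple {x_1}|{x_2}|...|{x_n}. -/
lemma heightElemRev_eq_none_iff {n : ℕ} (xs : List (Fin n)) (As : List (Finset (Fin n))) :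
    heightElemRev xs As = none ↔ xs.map (fun x => ({x} : Finset (Fin n))) <+: As := by
  induction xs generalizing As with
  | nil => simp [heightElemRev]
  | cons x xs ih =>
    cases As with
    | nil => simp [heightElemRev]
    | cons A As =>
      by_cases h : A = {x}
      · simp [heightElemRev, h, ih, List.prefix_cons_inj]
      · simp only [heightElemRev, if_neg h, List.map_cons]
        constructor
        · intro hc; exact absurd hc (by simp)
        · intro hc
          obtain ⟨t, ht⟩ := hc
          simp at ht
          exact absurd ht.1.symm h

lemma card_foldr_union {n : ℕ} (l : List (Finset (Fin n)))
    (hd : l.Pairwise Disjoint) :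
    (l.foldr (· ∪ ·) ∅).card = (l.map Finset.card).sum := by
  induction l with
  | nil => simp
  | cons A As ih =>
    rw [List.pairwise_cons] at hd
    have hdisj : Disjoint A (As.foldr (· ∪ ·) ∅) := by
      have h1 := hd.1
      clear ih hd
      induction As with
      | nil => simp
      | cons B Bs ih2 =>
        simp only [List.foldr_cons]
        exact Finset.disjoint_union_right.2 ⟨h1 B (by simp),
          ih2 (fun C hC => h1 C (List.mem_cons_of_mem _ hC))⟩
    simp only [List.foldr_cons, List.map_cons, List.sum_cons]
    rw [Finset.card_union_of_disjoint hdisj, ih hd.2]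

/-- For any order `R = (x_1,...,x_n)` on all of `[n]`, the standard matching
`μ_R` on `Γ_n` is near-perfect: a full `[n]`-tuple is critical (unmatched, i.e.
of height `0`) if and only if it is the unique tuple `{x_1}|{x_2}|...|{x_n}`. -/
theorem standard_matching_near_perfect (n : ℕ) (R : List (Fin n))
    (hnd : R.Nodup) (hall : ∀ x : Fin n, x ∈ R)
    (l : List (Finset (Fin n))) (hl : IsFullTuple n l) :
    heightElem R l = none ↔ l = R.map (fun x => ({x} : Finset (Fin n))) := by
  obtain ⟨hne, hdisj, hcov⟩ := hl
  have hRlen : R.length = n := by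
    have : R.length = (Finset.univ : Finset (Fin n)).card := by
      rw [← List.toFinset_card_of_nodup hnd]
      congr 1
      ext x; simp [hall x]
    simpa using this
  have hllen : l.length ≤ n := by
    have hcard := card_foldr_union l hdisj
    rw [hcov] at hcard
    simp only [Finset.card_univ, Fintype.card_fin] at hcard
    have : l.length ≤ (l.map Finset.card).sum := by
      calc l.length = (l.map Finset.card).length := by simp
        _ ≤ (l.map Finset.card).sum := by
            apply List.length_le_sum_of_one_le
            intro i hi
            simp only [List.mem_map] at hi
            obtain ⟨A, hA, rfl⟩ := hi
            exact Finset.card_pos.2 (hne A hA)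
    omega
  rw [heightElem, heightElemRev_eq_none_iff]
  constructor
  · intro hp
    have hlen : (R.reverse.map (fun x => ({x} : Finset (Fin n)))).length = n := by
      simp [hRlen]
    have := hp.length_le
    have heq : R.reverse.map (fun x => ({x} : Finset (Fin n))) = l.reverse := by
      apply List.IsPrefix.eq_of_length hp
      simp at this ⊢
      omega
    have : l = R.map (fun x => ({x} : Finset (Fin n))) := by
      have := congrArg List.reverse heq
      simpa [List.map_reverse] using this.symm
    exact this
  · intro h
    subst h
    rw [← List.map_reverse]
end

section
/- Let V be a nonempty subset of [n] and R an order on [n]\V. Then the standard matching μ_R restricted to the subgraph Γ_n(V) is a perfect matching. -/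
lemma hrev_none {n : ℕ} : ∀ (S : List (Fin n)) (m : List (Finset (Fin n))),
    heightElemRev S m = none →
    ∃ m', m = S.map (fun x => ({x} : Finset (Fin n))) ++ m'
  | [], m, _ => ⟨m, by simp⟩
  | x :: xs, [], h => by simp [heightElemRev] at h
  | x :: xs, A :: As, h => by
      simp only [heightElemRev] at h
      split_ifs at h with hA
      · obtain ⟨m', hm⟩ := hrev_none xs As h
        exact ⟨m', by simp [hA, hm]⟩

lemma hrev_mem {n : ℕ} : ∀ (S : List (Fin n)) (m : List (Finset (Fin n))) (x : Fin n),
    heightElemRev S m = some x → x ∈ S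
  | [], m, x, h => by simp [heightElemRev] at h
  | y :: ys, [], x, h => by simp [heightElemRev] at h; simp [h]
  | y :: ys, A :: As, x, h => by
      simp only [heightElemRev] at h
      split_ifs at h with hA
      · exact List.mem_cons_of_mem _ (hrev_mem ys As x h)
      · simp at h; simp [h]

lemma cflip_head {n : ℕ} (x : Fin n) (A : Finset (Fin n)) (rest : List (Finset (Fin n)))
    (B : Finset (Fin n)) (h : (cflip x (A :: rest)).head? = some B) : B = A ∨ x ∈ B := by
  cases rest with
  | nil =>
      simp only [cflip] at h
      split_ifs at h <;> simp_all <;> (right; rw [← h]; simp)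
  | cons C rest' =>
      simp only [cflip] at h
      split_ifs at h <;> simp_all <;> (right; rw [← h]; simp)

lemma mem_foldr {n : ℕ} (a : Fin n) : ∀ (l : List (Finset (Fin n))),
    a ∈ l.foldr (· ∪ ·) ∅ ↔ ∃ A ∈ l, a ∈ A
  | [] => by simp
  | A :: t => by simp [mem_foldr a t]

/-- Let `V` be a nonempty subset of `[n]` and `R` an order on `[n] \ V`. The
standard matching `μ_R` restricted to the subgraph `Γ_n(V)` (induced by full
tuples whose first block is not contained in `V`) is a perfect matching: every
vertex of `Γ_n(V)` has nonzero height, hence is matched, and its partner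
`F(σ,x_h)` again lies in `Γ_n(V)`. -/
theorem standard_matching_perfect_on_GnV (n : ℕ) (V : Finset (Fin n))
    (hV : V.Nonempty) (R : List (Fin n)) (hnd : R.Nodup)
    (hR : ∀ x : Fin n, x ∈ R ↔ x ∉ V)
    (l : List (Finset (Fin n))) (hl : IsFullTuple n l)
    (hlV : ∀ A, l.head? = some A → ¬ A ⊆ V) :
    ∃ xh : Fin n, heightElem R l = some xh ∧
      ∀ B, (cflip xh l).head? = some B → ¬ B ⊆ V := by
  cases h : heightElem R l with
  | none =>
      exfalso
      obtain ⟨m', hm⟩ := hrev_none R.reverse l.reverse h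
      have hl' : l = m'.reverse ++ R.map (fun x => ({x} : Finset (Fin n))) := by
        have := congrArg List.reverse hm
        simpa [List.map_reverse] using this
      cases hmr : m'.reverse with
      | nil =>
          rw [hmr] at hl'; simp at hl'
          obtain ⟨v, hv⟩ := hV
          have : v ∈ l.foldr (· ∪ ·) ∅ := by rw [hl.2.2]; simp
          rw [mem_foldr] at this
          obtain ⟨A, hAl, hvA⟩ := this
          rw [hl'] at hAl
          simp at hAl
          obtain ⟨x, hxR, hxA⟩ := hAl
          rw [← hxA] at hvA
          simp at hvA
          exact (hR x).1 hxR (hvA ▸ hv)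
      | cons A t =>
          rw [hmr] at hl'
          have hhead : l.head? = some A := by rw [hl']; simp
          apply hlV A hhead
          intro a ha
          by_contra hav
          have haR : a ∈ R := (hR a).2 hav
          have hpw := hl.2.1
          rw [hl'] at hpw
          simp only [List.cons_append, List.pairwise_cons] at hpw
          have hdisj : Disjoint A ({a} : Finset (Fin n)) := by
            apply hpw.1
            simp [haR]
          exact (Finset.disjoint_left.1 hdisj ha) (Finset.mem_singleton_self a)
  | some xh =>
      refine ⟨xh, rfl, ?_⟩
      have hxhR : xh ∈ R := by
        have := hrev_mem R.reverse l.reverse xh h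
        simpa using this
      have hxhV : xh ∉ V := (hR xh).1 hxhR
      intro B hB
      cases l with
      | nil => simp [cflip] at hB
      | cons A rest =>
          rcases cflip_head xh A rest B hB with rfl | hx
          · exact hlV B rfl
          · exact fun hBV => hxhV (hBV hx)
end

section
/- Let V be a nonempty subset of [n], R = (x_1,...,x_d) an order on [n]\V, and Ω a family of V-tuples. The standard matching μ_R restricts to a partial matching on Γ_n(Ω,V) whose critical vertices are exactly those of the form A_1|...|A_k|{x_1}|...|{x_d} where A_1|...|A_k is a full V-tuple belonging to Ω. In particular, if Ω contains no full V-tuple, then μ_R is a perfect matching on Γ_n(Ω,V). -/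
private lemma foldr_union_append {n : ℕ} (p q : List (Finset (Fin n))) :
    (p ++ q).foldr (· ∪ ·) ∅ = p.foldr (· ∪ ·) ∅ ∪ q.foldr (· ∪ ·) ∅ := by
  induction p with
  | nil => simp
  | cons A p ih => simp [ih, Finset.union_assoc]

private lemma subset_foldr_union {n : ℕ} {A : Finset (Fin n)} {p : List (Finset (Fin n))}
    (h : A ∈ p) : A ⊆ p.foldr (· ∪ ·) ∅ := by
  induction p with
  | nil => simp at h
  | cons B p ih =>
    rcases List.mem_cons.mp h with rfl | h
    · exact Finset.subset_union_left
    · exact (ih h).trans Finset.subset_union_right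

private lemma disjoint_foldr_union {n : ℕ} {t : Finset (Fin n)} {p : List (Finset (Fin n))}
    (h : ∀ A ∈ p, Disjoint A t) : Disjoint (p.foldr (· ∪ ·) ∅) t := by
  induction p with
  | nil => simp
  | cons B p ih =>
    simp only [List.foldr_cons, Finset.disjoint_union_left]
    exact ⟨h B (by simp), ih (fun A hA => h A (by simp [hA]))⟩

private lemma foldr_union_map_singleton {n : ℕ} (R : List (Fin n)) :
    (R.map (fun x => ({x} : Finset (Fin n)))).foldr (· ∪ ·) ∅ = R.toFinset := by
  induction R with
  | nil => simp
  | cons x R ih => simp [ih, Finset.insert_eq, -Finset.singleton_union]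

private lemma heightElemRev_none_iff {n : ℕ} (xs : List (Fin n)) :
    ∀ As : List (Finset (Fin n)),
      (heightElemRev xs As = none ↔ xs.map (fun x => ({x} : Finset (Fin n))) <+: As) := by
  induction xs with
  | nil => intro As; simp [heightElemRev]
  | cons x xs ih =>
    intro As
    cases As with
    | nil => simp [heightElemRev]
    | cons A As =>
      by_cases h : A = {x}
      · subst h
        simp [heightElemRev, ih As, List.cons_prefix_cons]
      · simp only [heightElemRev, if_neg h]
        simp [List.cons_prefix_cons, Ne.symm h]

private lemma heightElemRev_some_mem {n : ℕ} (xs : List (Fin n)) :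
    ∀ (As : List (Finset (Fin n))) (x : Fin n), heightElemRev xs As = some x → x ∈ xs := by
  induction xs with
  | nil => intro As x h; simp [heightElemRev] at h
  | cons y xs ih =>
    intro As x h
    cases As with
    | nil => simp [heightElemRev] at h; simp [h]
    | cons A As =>
      by_cases hA : A = {y}
      · simp [heightElemRev, hA] at h
        exact List.mem_cons_of_mem _ (ih As x h)
      · simp [heightElemRev, hA] at h; simp [h]

private lemma prefV_cflip {n : ℕ} {V : Finset (Fin n)} {x : Fin n} (hx : x ∉ V) :
    ∀ l : List (Finset (Fin n)),
      (cflip x l).takeWhile (fun A => decide (A ⊆ V))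
        = l.takeWhile (fun A => decide (A ⊆ V)) := by
  intro l
  induction l with
  | nil => simp [cflip]
  | cons A rest ih =>
    by_cases hA : x ∈ A
    · have hAV : ¬ A ⊆ V := fun h => hx (h hA)
      by_cases h2 : 2 ≤ A.card
      · have hs : ¬ ({x} : Finset (Fin n)) ⊆ V := by simp [hx]
        simp [cflip, hA, h2, List.takeWhile_cons, hAV, hs]
      · cases rest with
        | nil => simp [cflip, hA, h2]
        | cons B rest' =>
          have hs : ¬ insert x B ⊆ V := fun h => hx (h (Finset.mem_insert_self _ _))
          simp [cflip, hA, h2, List.takeWhile_cons, hAV, hs]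
    · by_cases hAV : A ⊆ V
      · simp [cflip, hA, List.takeWhile_cons, hAV, ih]
      · simp [cflip, hA, List.takeWhile_cons, hAV]

/-- Let `V ⊆ [n]` be nonempty, `R = (x_1,...,x_d)` an order on `[n] \ V`, and
`Ω` a family of `V`-tuples. The standard matching `μ_R` restricts to a partial
matching on `Γ_n(Ω,V)` (the subgraph induced by full tuples whose `V`-prefix
lies in `Ω`), and its critical vertices are exactly those of the form
`A_1|...|A_k|{x_1}|...|{x_d}` where `A_1|...|A_k` is a full `V`-tuple in `Ω`.
In particular, if `Ω` has no full `V`-tuples, `μ_R` is perfect on `Γ_n(Ω,V)`. -/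
theorem standard_matching_on_GnOmegaV (n : ℕ) (V : Finset (Fin n))
    (hV : V.Nonempty) (R : List (Fin n)) (hnd : R.Nodup)
    (hR : ∀ x : Fin n, x ∈ R ↔ x ∉ V) (Ω : Set (List (Finset (Fin n))))
    (l : List (Finset (Fin n))) (hl : IsFullTuple n l) (hlΩ : prefV V l ∈ Ω) :
    (∀ xh : Fin n, heightElem R l = some xh → prefV V (cflip xh l) ∈ Ω) ∧
    (heightElem R l = none ↔
      ∃ p ∈ Ω, p.foldr (· ∪ ·) ∅ = V ∧
        l = p ++ R.map (fun x => ({x} : Finset (Fin n)))) ∧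
    ((∀ p ∈ Ω, p.foldr (· ∪ ·) ∅ ≠ V) → heightElem R l ≠ none) := by
  obtain ⟨hne, hdisj, huniv⟩ := hl
  have hiff : heightElem R l = none ↔
      ∃ p ∈ Ω, p.foldr (· ∪ ·) ∅ = V ∧
        l = p ++ R.map (fun x => ({x} : Finset (Fin n))) := by
    rw [heightElem, heightElemRev_none_iff]
    rw [List.map_reverse, List.reverse_prefix]
    constructor
    · rintro ⟨p, hp⟩
      have hl' : l = p ++ R.map (fun x => ({x} : Finset (Fin n))) := hp.symm
      -- union of the singleton part is Vᶜ
      have hq : (R.map (fun x => ({x} : Finset (Fin n)))).foldr (· ∪ ·) ∅ = Vᶜ := by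
        rw [foldr_union_map_singleton]
        ext y
        simp [hR y]
      -- disjointness across the append
      have hcross : ∀ A ∈ p, ∀ B ∈ R.map (fun x => ({x} : Finset (Fin n))), Disjoint A B := by
        rw [hl', List.pairwise_append] at hdisj
        exact hdisj.2.2
      have hdisjPQ : Disjoint (p.foldr (· ∪ ·) ∅) (Vᶜ) := by
        rw [← hq]
        exact disjoint_foldr_union (fun A hA =>
          (disjoint_foldr_union (fun B hB => (hcross A hA B hB).symm)).symm)
      have hun : p.foldr (· ∪ ·) ∅ ∪ Vᶜ = Finset.univ := by
        rw [← hq, ← foldr_union_append, ← hl', huniv]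
      have hpV : p.foldr (· ∪ ·) ∅ = V := by
        apply Finset.Subset.antisymm
        · intro y hy
          by_contra hyV
          exact (Finset.disjoint_left.mp hdisjPQ) hy (Finset.mem_compl.mpr hyV)
        · intro y hy
          have : y ∈ p.foldr (· ∪ ·) ∅ ∪ Vᶜ := by rw [hun]; exact Finset.mem_univ y
          rcases Finset.mem_union.mp this with h | h
          · exact h
          · exact absurd hy (Finset.mem_compl.mp h)
      -- prefV V l = p
      have hpref : prefV V l = p := by
        rw [hl', prefV]
        have hall : ∀ A ∈ p, (fun A => decide (A ⊆ V)) A = true := by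
          intro A hA
          simp only [decide_eq_true_eq]
          rw [← hpV]
          exact subset_foldr_union hA
        rw [List.takeWhile_append_of_pos hall]
        cases R with
        | nil => simp
        | cons x R' =>
          have hx : x ∉ V := (hR x).mp (by simp)
          simp [List.takeWhile_cons, hx]
      exact ⟨p, hpref ▸ hlΩ, hpV, hl'⟩
    · rintro ⟨p, _, _, hl'⟩
      exact ⟨p, hl'.symm⟩
  refine ⟨?_, hiff, ?_⟩
  · intro xh h
    have hmem : xh ∈ R := by
      have := heightElemRev_some_mem R.reverse l.reverse xh h
      exact List.mem_reverse.mp this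
    have hxV : xh ∉ V := (hR xh).mp hmem
    have := prefV_cflip (V := V) hxV l
    rw [prefV, this, ← prefV]
    exact hlΩ
  · intro hno hnone
    obtain ⟨p, hpΩ, hpV, -⟩ := hiff.mp hnone
    exact hno p hpΩ hpV
end

section
/- In a bipartite graph G with a matching μ, if there exists a properly alternating edge path (possibly self-intersecting) between two distinct vertices v and w, then there exists a properly alternating non-self-intersecting edge path between v and w. -/
/-- `M` is a (partial) matching on `G`, given as a set of edges no two of which
share a vertex. -/
def IsMatchingSet {V : Type*} (G : SimpleGraph V) (M : Set (Sym2 V)) : Prop :=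
  M ⊆ G.edgeSet ∧ ∀ e ∈ M, ∀ f ∈ M, e ≠ f → ∀ x, x ∈ e → x ∉ f

/-- A vertex is critical (unmatched) with respect to `M`. -/
def CriticalVtx {V : Type*} (M : Set (Sym2 V)) (v : V) : Prop :=
  ∀ e ∈ M, v ∉ e

/-- A walk is properly alternating with respect to `M`: consecutive edges
alternate between matching and non-matching edges, and at each end it either
starts/ends with a matching edge or starts/ends at a critical vertex. -/
def ProperlyAlternating {V : Type*} {G : SimpleGraph V} (M : Set (Sym2 V))
    {v w : V} (p : G.Walk v w) : Prop :=
  (p.edges.Chain' fun e f => (e ∈ M ↔ f ∉ M)) ∧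
  (∀ e ∈ p.edges.head?, e ∈ M ∨ CriticalVtx M v) ∧
  (∀ e ∈ p.edges.getLast?, e ∈ M ∨ CriticalVtx M w)


section ListLemmas

variable {α : Type*} (P : α → Prop)

private lemma alt_get {l : List α} (h : l.Chain' fun e f => P e ↔ ¬ P f)
    (h0 : 0 < l.length) : ∀ i (hi : i < l.length), (P (l[i]'hi) ↔ (P (l[0]'h0) ↔ Even i)) := by
  intro i
  induction i with
  | zero => intro hi; simp
  | succ i ih =>
    intro hi
    have hc := List.isChain_iff_getElem.1 h i (by omega)
    have := ih (by omega)
    rw [Nat.even_add_one]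
    tauto

private lemma alt_head_last {l : List α} (h : l.Chain' fun e f => P e ↔ ¬ P f)
    (hev : Even l.length) :
    ∀ x ∈ l.head?, ∀ y ∈ l.getLast?, (P x ↔ ¬ P y) := by
  intro x hx y hy
  have hne : l ≠ [] := by rintro rfl; simp at hx
  have h0 : 0 < l.length := List.length_pos_iff.2 hne
  have h1 : l.length - 1 < l.length := by omega
  rw [List.head?_eq_getElem?, List.getElem?_eq_getElem h0] at hx
  rw [List.getLast?_eq_getElem?, List.getElem?_eq_getElem h1] at hy
  injection hx with hx
  injection hy with hy
  subst hx; subst hy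
  have hodd : ¬ Even (l.length - 1) := by rcases hev with ⟨k, hk⟩; rintro ⟨m, hm⟩; omega
  have := alt_get P h h0 (l.length - 1) h1
  tauto

end ListLemmas

section Splice

variable {α : Type*} (P : α → Prop)

private lemma alt_splice (a b c : List α)
    (h : (a ++ b ++ c).Chain' fun e f => P e ↔ ¬ P f) (hev : Even b.length) :
    ((a ++ c).Chain' fun e f => P e ↔ ¬ P f) ∧
    (∀ x ∈ (a ++ c).head?, ∀ y ∈ (a ++ b ++ c).head?, (P x ↔ P y)) ∧
    (∀ x ∈ (a ++ c).getLast?, ∀ y ∈ (a ++ b ++ c).getLast?, (P x ↔ P y)) := by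
  by_cases hbnil : b = []
  · subst hbnil
    simp only [List.append_nil] at h ⊢
    refine ⟨h, fun x hx y hy => ?_, fun x hx y hy => ?_⟩ <;>
      · simp only [Option.mem_def] at hx hy
        rw [hx] at hy
        injection hy with hy
        rw [hy]
  rw [List.append_assoc] at h
  obtain ⟨ha, hbc, hj1⟩ := List.isChain_append.1 h
  obtain ⟨hb, hc, hj2⟩ := List.isChain_append.1 hbc
  have hbhl := alt_head_last P hb hev
  obtain ⟨bh, hbh⟩ : ∃ bh, b.head? = some bh := by
    cases b with | nil => exact absurd rfl hbnil | cons x t => exact ⟨x, rfl⟩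
  obtain ⟨bl, hbl⟩ : ∃ bl, b.getLast? = some bl := by
    rw [List.getLast?_eq_getElem?, List.getElem?_eq_getElem (by
      simpa using Nat.pos_of_ne_zero (fun hh => hbnil (List.length_eq_zero_iff.1 hh)))]
    exact ⟨_, rfl⟩
  have hkey : P bh ↔ ¬ P bl := hbhl bh hbh bl hbl
  refine ⟨List.isChain_append.2 ⟨ha, hc, ?_⟩, ?_, ?_⟩
  · intro x hx y hy
    have h1 := hj1 x hx bh (by rw [List.head?_append_of_ne_nil _ hbnil]; exact hbh)
    have h2 := hj2 bl hbl y hy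
    tauto
  · intro x hx y hy
    by_cases hanil : a = []
    · subst hanil
      simp only [List.nil_append] at hx hy
      rw [List.head?_append_of_ne_nil _ hbnil] at hy
      have h2 := hj2 bl hbl x hx
      have : y = bh := by rw [Option.mem_def, hbh] at hy; exact (Option.some.inj hy).symm
      subst this
      tauto
    · rw [List.head?_append_of_ne_nil _ hanil] at hx
      rw [List.append_assoc, List.head?_append_of_ne_nil _ hanil] at hy
      rw [hx] at hy
      injection hy with hy
      rw [hy]
  · intro x hx y hy
    by_cases hcnil : c = []
    · subst hcnil
      simp only [List.append_nil] at hx hy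
      rw [List.getLast?_append_of_ne_nil _ hbnil] at hy
      have h1 := hj1 x hx bh (by rw [List.head?_append_of_ne_nil _ hbnil]; exact hbh)
      have : y = bl := by rw [Option.mem_def, hbl] at hy; exact (Option.some.inj hy).symm
      subst this
      tauto
    · rw [List.getLast?_append_of_ne_nil _ hcnil] at hx
      rw [List.append_assoc, List.getLast?_append_of_ne_nil _ (by simp [hcnil]), List.getLast?_append_of_ne_nil _ hcnil] at hy
      rw [hx] at hy
      injection hy with hy
      rw [hy]

end Splice

section Graph

open SimpleGraph

private lemma coloring_even {V : Type*} {G : SimpleGraph V} (C : G.Coloring (Fin 2)) :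
    ∀ {x y : V} (p : G.Walk x y), Even p.length ↔ C x = C y := by
  intro x y p
  induction p with
  | nil => simp
  | @cons x z y h q ih =>
    have hxz : C x ≠ C z := C.valid h
    have key : ∀ a b c : Fin 2, a ≠ b → (¬ (b = c) ↔ a = c) := by decide
    rw [Walk.length_cons, Nat.even_add_one, ih, key _ _ _ hxz]

private lemma closed_even {V : Type*} {G : SimpleGraph V} (hbip : G.Colorable 2) {u : V}
    (c : G.Walk u u) : Even c.length := by
  obtain ⟨C⟩ := hbip
  exact (coloring_even C c).2 rfl

end Graph

section Decompose

open SimpleGraph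

private lemma decompose {V : Type*} {G : SimpleGraph V} {v w : V} (p : G.Walk v w)
    (hnp : ¬ p.IsPath) :
    ∃ (u : V) (q1 : G.Walk v u) (c : G.Walk u u) (r : G.Walk u w),
      p = q1.append (c.append r) ∧ 0 < c.length := by
  classical
  rw [Walk.isPath_def] at hnp
  obtain ⟨u, hu⟩ := List.exists_duplicate_iff_not_nodup.2 hnp
  have hcount : 2 ≤ p.support.count u := List.duplicate_iff_two_le_count.1 hu
  have h1 : u ∈ p.support := hu.mem
  have hspec := p.take_spec h1
  have hcnt1 := p.count_support_takeUntil_eq_one h1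
  have hsup : p.support = (p.takeUntil u h1).support ++ (p.dropUntil u h1).support.tail := by
    conv_lhs => rw [← hspec]
    exact Walk.support_append _ _
  have hmem : u ∈ (p.dropUntil u h1).support.tail := by
    rw [hsup, List.count_append, hcnt1] at hcount
    exact List.count_pos_iff.1 (by omega)
  set q2 := p.dropUntil u h1 with hq2
  cases hq2' : q2 with
  | nil => rw [hq2'] at hmem; simp [Walk.support_nil] at hmem
  | @cons _ z _ h' q3 =>
    have hu3 : u ∈ q3.support := by
      rw [hq2'] at hmem; simpa [Walk.support_cons] using hmem
    refine ⟨u, p.takeUntil u h1, Walk.cons h' (q3.takeUntil u hu3), q3.dropUntil u hu3, ?_, ?_⟩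
    · conv_lhs => rw [← hspec]
      rw [hq2', Walk.cons_append, q3.take_spec hu3]
    · simp [Walk.length_cons]

end Decompose

open SimpleGraph in
private lemma aux_main {V : Type*} (G : SimpleGraph V) (hbip : G.Colorable 2)
    (M : Set (Sym2 V)) (v w : V) (hvw : v ≠ w) :
    ∀ (n : ℕ) (p : G.Walk v w), p.length ≤ n → ProperlyAlternating M p →
      ∃ q : G.Walk v w, q.IsPath ∧ ProperlyAlternating M q := by
  intro n
  induction n with
  | zero =>
    intro p hn hp
    cases p with
    | nil => exact absurd rfl hvw
    | cons h q => simp [Walk.length_cons] at hn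
  | succ n ih =>
    intro p hn hp
    by_cases hpath : p.IsPath
    · exact ⟨p, hpath, hp⟩
    obtain ⟨u, q1, c, r, hdec, hcpos⟩ := decompose p hpath
    have hedges : p.edges = q1.edges ++ c.edges ++ r.edges := by
      rw [hdec, Walk.edges_append, Walk.edges_append, List.append_assoc]
    have hev : Even c.edges.length := by rw [Walk.length_edges]; exact closed_even hbip c
    obtain ⟨hch, hhd, hlast⟩ := hp
    rw [hedges] at hch hhd hlast
    obtain ⟨H1, H2, H3⟩ := alt_splice (fun e => e ∈ M) q1.edges c.edges r.edges hch hev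
    set q : G.Walk v w := q1.append r with hq
    have hqe : q.edges = q1.edges ++ r.edges := Walk.edges_append _ _
    have hcne : c.edges ≠ [] := by
      apply List.ne_nil_of_length_pos
      rw [Walk.length_edges]; exact hcpos
    have hpe : (q1.edges ++ c.edges ++ r.edges) ≠ [] := by simp [hcne]
    have hPA : ProperlyAlternating M q := by
      refine ⟨by rw [hqe]; exact H1, ?_, ?_⟩
      · intro e he
        rw [hqe] at he
        have hym : (q1.edges ++ c.edges ++ r.edges).head hpe ∈
            (q1.edges ++ c.edges ++ r.edges).head? :=
          Option.mem_def.2 (List.head?_eq_head hpe)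
        have hiff := H2 e he _ hym
        rcases hhd _ hym with h | h
        · exact Or.inl (hiff.2 h)
        · exact Or.inr h
      · intro e he
        rw [hqe] at he
        have hym : (q1.edges ++ c.edges ++ r.edges).getLast hpe ∈
            (q1.edges ++ c.edges ++ r.edges).getLast? :=
          Option.mem_def.2 (List.getLast?_eq_getLast hpe)
        have hiff := H3 e he _ hym
        rcases hlast _ hym with h | h
        · exact Or.inl (hiff.2 h)
        · exact Or.inr h
    have hlen : q.length ≤ n := by
      have hpl := congrArg Walk.length hdec
      rw [Walk.length_append, Walk.length_append] at hpl
      have hql : q.length = q1.length + r.length := Walk.length_append _ _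
      omega
    exact ih q hlen hPA

/-- In a bipartite graph with a matching `M`, if there is a properly alternating
walk between two distinct vertices `v` and `w`, then there is a properly
alternating non-self-intersecting path between `v` and `w`. -/
theorem exists_properly_alternating_path {V : Type*} (G : SimpleGraph V)
    (hbip : G.Colorable 2) (M : Set (Sym2 V)) (hM : IsMatchingSet G M)
    (v w : V) (hvw : v ≠ w) (p : G.Walk v w) (hp : ProperlyAlternating M p) :
    ∃ q : G.Walk v w, q.IsPath ∧ ProperlyAlternating M q :=
  aux_main G hbip M v w hvw p.length p le_rfl hp
end

section
/- Let (S,T) and (S',T') be disjoint well-ordered pairs of subsets of [n] that are not nested. Then the standard paths p_{S,T} and p_{S',T'} in the flip graph Γ_n are vertex-disjoint. -/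
/-- The set of vertices (full `[n]`-tuples, encoded as lists of blocks) of the
standard path `p_{S,T}` associated to a well-ordered pair `(S,T)`. The pair is
encoded by the ordering list `xs` of the elements of `T` (elements of `S` first)
together with `s = |S|`, so `S` is the set of the first `s` entries of `xs` and
`T` is the set of all entries. The path goes from `b_T = T|([n]\T)`, splitting
`S` into singletons, merging them back, splitting `T \ S` into singletons, and
finally merging them into the complement, ending at `b_S = S|([n]\S)`. -/
def pathVerts (n : ℕ) (xs : List (Fin n)) (s : ℕ) :
    Set (List (Finset (Fin n))) :=
  let T : Finset (Fin n) := xs.toFinset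
  let S : Finset (Fin n) := (xs.take s).toFinset
  let C : Finset (Fin n) := Finset.univ \ T
  let t : ℕ := xs.length
  { l | (∃ k ≤ s, l = ((xs.take k).map fun x => ({x} : Finset (Fin n))) ++
            [T \ (xs.take k).toFinset, C]) ∨
        (∃ j, j + 1 ≤ s ∧ l = ((xs.take j).map fun x => ({x} : Finset (Fin n))) ++
            [S \ (xs.take j).toFinset, T \ S, C]) ∨
        (∃ k, k + 1 ≤ t - s ∧ l = [S] ++
            (((xs.drop s).take k).map fun x => ({x} : Finset (Fin n))) ++
            [T \ (xs.take (s + k)).toFinset, C]) ∨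
        (∃ m ≤ t - s, l = [S] ++
            (((xs.drop s).take m).map fun x => ({x} : Finset (Fin n))) ++
            [Finset.univ \ (xs.take (s + m)).toFinset]) }


private lemma take_sub_take {n : ℕ} (xs : List (Fin n)) {a b : ℕ} (h : a ≤ b) :
    (xs.take a).toFinset ⊆ (xs.take b).toFinset := by
  have h1 : (xs.take a).Sublist (xs.take b) := by
    have := List.take_sublist a (xs.take b)
    rwa [List.take_take, Nat.min_eq_left h] at this
  intro x hx
  simp only [List.mem_toFinset] at *
  exact h1.subset hx

private lemma take_sub_self {n : ℕ} (xs : List (Fin n)) (a : ℕ) :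
    (xs.take a).toFinset ⊆ xs.toFinset := by
  intro x hx
  simp only [List.mem_toFinset] at *
  exact (List.take_sublist a xs).subset hx

private lemma compl_compl' {n : ℕ} (U : Finset (Fin n)) :
    Finset.univ \ (Finset.univ \ U) = U := by
  simp [Finset.sdiff_sdiff_self_left]

private lemma pathVerts_spec {n : ℕ} (xs : List (Fin n)) (s : ℕ)
    (hs1 : 1 ≤ s) (hs2 : s < xs.length) :
    ∀ l ∈ pathVerts n xs s, ∃ (H L : Finset (Fin n)) (mid : List (Finset (Fin n))),
      l = H :: (mid ++ [L]) ∧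
      (xs.take s).toFinset ⊆ Finset.univ \ L ∧
      Finset.univ \ L ⊆ xs.toFinset ∧
      (H = (xs.take s).toFinset ∨
        ((∃ x ∈ (xs.take s).toFinset, H = {x}) ∧ Finset.univ \ L = xs.toFinset) ∨
        l = [xs.toFinset, Finset.univ \ xs.toFinset]) := by
  intro l hl
  obtain ⟨x, xs', hxcons⟩ :=
    List.exists_cons_of_ne_nil (List.ne_nil_of_length_pos (show 0 < xs.length by omega))
  have hxS : x ∈ (xs.take s).toFinset := by
    obtain ⟨s₀, rfl⟩ : ∃ s₀, s = s₀ + 1 := ⟨s - 1, by omega⟩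
    rw [hxcons]
    simp
  have hST : (xs.take s).toFinset ⊆ xs.toFinset := take_sub_self xs s
  have hTT : Finset.univ \ (Finset.univ \ xs.toFinset) = xs.toFinset := compl_compl' _
  have hSsub : (xs.take s).toFinset ⊆ Finset.univ \ (Finset.univ \ xs.toFinset) := by
    rw [hTT]; exact hST
  have hTsub : Finset.univ \ (Finset.univ \ xs.toFinset) ⊆ xs.toFinset := by
    rw [hTT]
  simp only [pathVerts, Set.mem_setOf_eq] at hl
  rcases hl with ⟨k, hk, rfl⟩ | ⟨j, hj, rfl⟩ | ⟨k, hk, rfl⟩ | ⟨m, hm, rfl⟩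
  · rcases Nat.eq_zero_or_pos k with rfl | hkpos
    · refine ⟨xs.toFinset, Finset.univ \ xs.toFinset, [], by simp, hSsub, hTsub, ?_⟩
      right; right; simp
    · obtain ⟨k₀, rfl⟩ : ∃ k₀, k = k₀ + 1 := ⟨k - 1, by omega⟩
      refine ⟨{x}, Finset.univ \ xs.toFinset,
        ((xs'.take k₀).map fun y => ({y} : Finset (Fin n))) ++
          [xs.toFinset \ (xs.take (k₀ + 1)).toFinset], ?_, hSsub, hTsub, ?_⟩
      · rw [hxcons]; simp
      · right; left; exact ⟨⟨x, hxS, rfl⟩, hTT⟩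
  · rcases Nat.eq_zero_or_pos j with rfl | hjpos
    · refine ⟨(xs.take s).toFinset, Finset.univ \ xs.toFinset,
        [xs.toFinset \ (xs.take s).toFinset], by simp, hSsub, hTsub, Or.inl rfl⟩
    · obtain ⟨j₀, rfl⟩ : ∃ j₀, j = j₀ + 1 := ⟨j - 1, by omega⟩
      refine ⟨{x}, Finset.univ \ xs.toFinset,
        ((xs'.take j₀).map fun y => ({y} : Finset (Fin n))) ++
          [(xs.take s).toFinset \ (xs.take (j₀ + 1)).toFinset,
            xs.toFinset \ (xs.take s).toFinset], ?_, hSsub, hTsub, ?_⟩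
      · rw [hxcons]; simp
      · right; left; exact ⟨⟨x, hxS, rfl⟩, hTT⟩
  · refine ⟨(xs.take s).toFinset, Finset.univ \ xs.toFinset,
      (((xs.drop s).take k).map fun y => ({y} : Finset (Fin n))) ++
        [xs.toFinset \ (xs.take (s + k)).toFinset], by simp, hSsub, hTsub, Or.inl rfl⟩
  · refine ⟨(xs.take s).toFinset, Finset.univ \ (xs.take (s + m)).toFinset,
      ((xs.drop s).take m).map fun y => ({y} : Finset (Fin n)), by simp, ?_, ?_, Or.inl rfl⟩
    · rw [compl_compl']; exact take_sub_take xs (Nat.le_add_right s m)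
    · rw [compl_compl']; exact take_sub_self xs (s + m)

/-- If `(S,T)` and `(S',T')` are disjoint well-ordered pairs of subsets of `[n]`
which are not nested, then the standard paths `p_{S,T}` and `p_{S',T'}` in the
flip graph `Γ_n` are vertex-disjoint. -/
theorem standard_paths_disjoint (n : ℕ)
    (xs : List (Fin n)) (s : ℕ) (hxs : xs.Nodup)
    (hs1 : 1 ≤ s) (hs2 : s < xs.length) (ht : xs.length < n)
    (ys : List (Fin n)) (s' : ℕ) (hys : ys.Nodup)
    (hs1' : 1 ≤ s') (hs2' : s' < ys.length) (ht' : ys.length < n)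
    -- the two well-ordered pairs of sets
    (S T S' T' : Finset (Fin n))
    (hS : S = (xs.take s).toFinset) (hT : T = xs.toFinset)
    (hS' : S' = (ys.take s').toFinset) (hT' : T' = ys.toFinset)
    -- disjointness: {S,T} ∩ {S',T'} = ∅
    (h1 : S ≠ S') (h2 : S ≠ T') (h3 : T ≠ S') (h4 : T ≠ T')
    -- not nested: neither S ⊂ S' ⊂ T' ⊂ T nor S' ⊂ S ⊂ T ⊂ T'
    (hn1 : ¬ (S ⊂ S' ∧ S' ⊂ T' ∧ T' ⊂ T))
    (hn2 : ¬ (S' ⊂ S ∧ S ⊂ T ∧ T ⊂ T')) :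
    pathVerts n xs s ∩ pathVerts n ys s' = ∅ := by
  subst hS hT hS' hT'
  ext l
  simp only [Set.mem_inter_iff, Set.mem_empty_iff_false, iff_false, not_and]
  intro hl1 hl2
  obtain ⟨H, L, mid, hform, hSB, hBT, hH⟩ := pathVerts_spec xs s hs1 hs2 l hl1
  obtain ⟨H', L', mid', hform', hSB', hBT', hH'⟩ := pathVerts_spec ys s' hs1' hs2' l hl2
  rw [hform] at hform'
  obtain ⟨hHH, htail⟩ : H = H' ∧ mid ++ [L] = mid' ++ [L'] := by
    injection hform' with a b; exact ⟨a, b⟩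
  have hLL : L = L' := by
    have := (List.append_inj' htail (by simp)).2
    simpa using this
  -- card facts
  have hcS : (xs.take s).toFinset.card = s := by
    rw [List.toFinset_card_of_nodup ((List.take_sublist s xs).nodup hxs), List.length_take]
    omega
  have hcT : xs.toFinset.card = xs.length := List.toFinset_card_of_nodup hxs
  have hcS' : (ys.take s').toFinset.card = s' := by
    rw [List.toFinset_card_of_nodup ((List.take_sublist s' ys).nodup hys), List.length_take]
    omega
  have hcT' : ys.toFinset.card = ys.length := List.toFinset_card_of_nodup hys
  have hssST : (xs.take s).toFinset ⊂ xs.toFinset := by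
    refine Finset.ssubset_iff_subset_ne.mpr ⟨take_sub_self xs s, fun h => ?_⟩
    have := congrArg Finset.card h; rw [hcS, hcT] at this; omega
  have hssST' : (ys.take s').toFinset ⊂ ys.toFinset := by
    refine Finset.ssubset_iff_subset_ne.mpr ⟨take_sub_self ys s', fun h => ?_⟩
    have := congrArg Finset.card h; rw [hcS', hcT'] at this; omega
  rcases hH with hA | ⟨⟨xx, hxx, hHx⟩, hBe⟩ | hbT <;>
    rcases hH' with hA' | ⟨⟨yy, hyy, hHy⟩, hBe'⟩ | hbT'
  · rw [hHH] at hA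
    exact h1 (hA.symm.trans hA')
  · -- H = S, H' = {yy} : nested case hn1
    rw [hHH] at hA
    have hSy : (xs.take s).toFinset = {yy} := hA.symm.trans hHy
    have hsub1 : (xs.take s).toFinset ⊆ (ys.take s').toFinset := by
      rw [hSy]; exact Finset.singleton_subset_iff.mpr hyy
    have hsub2 : ys.toFinset ⊆ xs.toFinset := by
      rw [← hBe', ← hLL]; exact hBT
    exact hn1 ⟨Finset.ssubset_iff_subset_ne.mpr ⟨hsub1, h1⟩, hssST',
      Finset.ssubset_iff_subset_ne.mpr ⟨hsub2, fun h => h4 h.symm⟩⟩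
  · rw [hform] at hbT'
    have : H = ys.toFinset := by injection hbT'
    exact h2 (hA.symm.trans this)
  · -- H = {xx}, H' = S' : nested case hn2
    rw [hHH] at hHx
    have hSx : (ys.take s').toFinset = {xx} := hA'.symm.trans hHx
    have hsub1 : (ys.take s').toFinset ⊆ (xs.take s).toFinset := by
      rw [hSx]; exact Finset.singleton_subset_iff.mpr hxx
    have hsub2 : xs.toFinset ⊆ ys.toFinset := by
      rw [← hBe, hLL]; exact hBT'
    exact hn2 ⟨Finset.ssubset_iff_subset_ne.mpr ⟨hsub1, fun h => h1 h.symm⟩, hssST,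
      Finset.ssubset_iff_subset_ne.mpr ⟨hsub2, h4⟩⟩
  · rw [hLL] at hBe
    exact h4 (hBe.symm.trans hBe')
  · rw [hform] at hbT'
    have hT' : H = ys.toFinset := by injection hbT'
    have := congrArg Finset.card (hHx.symm.trans hT')
    rw [Finset.card_singleton, hcT'] at this
    omega
  · rw [hform] at hbT
    have hT : H = xs.toFinset := by injection hbT
    exact h3 (hT.symm.trans (hHH.trans hA'))
  · rw [hform] at hbT
    have hT : H = xs.toFinset := by injection hbT
    rw [hHH] at hT
    have := congrArg Finset.card (hHy.symm.trans hT)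
    rw [Finset.card_singleton, hcT] at this
    omega
  · rw [hform] at hbT hbT'
    have hT : H = xs.toFinset := by injection hbT
    have hT' : H = ys.toFinset := by injection hbT'
    exact h4 (hT.symm.trans hT')
end

section
/- Given two disjoint proper families Σ and Λ of subsets of [n] with a comparable matching φ: Σ → Λ, there exists a non-nested comparable matching ψ: Σ → Λ. -/
/-- The well-ordered pair (ordered by inclusion) associated to `S` under a
comparable matching `ψ`. -/
def wop {n : ℕ} (ψ : Finset (Fin n) → Finset (Fin n)) (S : Finset (Fin n)) :
    Finset (Fin n) × Finset (Fin n) :=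
  if S ⊆ ψ S then (S, ψ S) else (ψ S, S)

/-- Two inclusion-ordered pairs `(A,B)` and `(A',B')` are nested if
`A ⊂ A' ⊂ B' ⊂ B` or `A' ⊂ A ⊂ B ⊂ B'`. -/
def NestedPairs {n : ℕ} (p q : Finset (Fin n) × Finset (Fin n)) : Prop :=
  (p.1 ⊂ q.1 ∧ q.1 ⊂ q.2 ∧ q.2 ⊂ p.2) ∨ (q.1 ⊂ p.1 ∧ p.1 ⊂ p.2 ∧ p.2 ⊂ q.2)

namespace NonNestedAux

lemma wop_left {n : ℕ} (ψ : Finset (Fin n) → Finset (Fin n)) (S : Finset (Fin n))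
    (h : S ⊂ ψ S) : wop ψ S = (S, ψ S) := by
  unfold wop; rw [if_pos h.subset]

lemma wop_right {n : ℕ} (ψ : Finset (Fin n) → Finset (Fin n)) (S : Finset (Fin n))
    (h : ψ S ⊂ S) : wop ψ S = (ψ S, S) := by
  unfold wop
  rw [if_neg]
  intro hs
  exact h.ne (Finset.Subset.antisymm h.subset hs)

/-- the weight of a matching -/
noncomputable def weight {n : ℕ} (Sig : Set (Finset (Fin n)))
    (ψ : Finset (Fin n) → Finset (Fin n)) : ℕ :=
  ∑ U ∈ (Set.toFinite Sig).toFinset, (n + 1) ^ ((wop ψ U).2.card - (wop ψ U).1.card)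

lemma swap_step {n : ℕ} (Sig Lam : Set (Finset (Fin n)))
    (ψ : Finset (Fin n) → Finset (Fin n))
    (hb : Set.BijOn ψ Sig Lam) (hc : ∀ S ∈ Sig, S ⊂ ψ S ∨ ψ S ⊂ S)
    (S T : Finset (Fin n)) (hS : S ∈ Sig) (hT : T ∈ Sig)
    (hnest : (wop ψ S).1 ⊂ (wop ψ T).1 ∧ (wop ψ T).1 ⊂ (wop ψ T).2 ∧
      (wop ψ T).2 ⊂ (wop ψ S).2) :
    ∃ ψ', Set.BijOn ψ' Sig Lam ∧ (∀ U ∈ Sig, U ⊂ ψ' U ∨ ψ' U ⊂ U) ∧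
      weight Sig ψ' < weight Sig ψ := by
  classical
  have hST : S ≠ T := by
    rintro rfl
    exact ssubset_irrefl _ hnest.1
  obtain ⟨A, B, hAB, hwS, hSor⟩ :
      ∃ A B, A ⊂ B ∧ wop ψ S = (A, B) ∧ ((S = A ∧ ψ S = B) ∨ (S = B ∧ ψ S = A)) := by
    rcases hc S hS with h | h
    · exact ⟨S, ψ S, h, wop_left ψ S h, Or.inl ⟨rfl, rfl⟩⟩
    · exact ⟨ψ S, S, h, wop_right ψ S h, Or.inr ⟨rfl, rfl⟩⟩
  obtain ⟨A', B', hAB', hwT, hTor⟩ :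
      ∃ A' B', A' ⊂ B' ∧ wop ψ T = (A', B') ∧
        ((T = A' ∧ ψ T = B') ∨ (T = B' ∧ ψ T = A')) := by
    rcases hc T hT with h | h
    · exact ⟨T, ψ T, h, wop_left ψ T h, Or.inl ⟨rfl, rfl⟩⟩
    · exact ⟨ψ T, T, h, wop_right ψ T h, Or.inr ⟨rfl, rfl⟩⟩
  rw [hwS, hwT] at hnest
  obtain ⟨h1, h2, h3⟩ := hnest
  -- h1 : A ⊂ A', h2 : A' ⊂ B', h3 : B' ⊂ B
  set e := Equiv.swap S T with he
  set ψ' := fun U => ψ (e U) with hψ'def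
  have hψ'S : ψ' S = ψ T := by simp [hψ'def, he]
  have hψ'T : ψ' T = ψ S := by simp [hψ'def, he]
  have hψ'U : ∀ U, U ≠ S → U ≠ T → ψ' U = ψ U := by
    intro U hu1 hu2
    simp [hψ'def, he, Equiv.swap_apply_of_ne_of_ne hu1 hu2]
  have hmaps : ∀ x ∈ Sig, e x ∈ Sig := by
    intro x hx
    rcases eq_or_ne x S with rfl | hx1
    · simpa [he] using hT
    rcases eq_or_ne x T with rfl | hx2
    · simpa [he] using hS
    · simpa [he, Equiv.swap_apply_of_ne_of_ne hx1 hx2] using hx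
  have hbije : Set.BijOn e Sig Sig := by
    refine ⟨hmaps, e.injective.injOn, ?_⟩
    intro y hy
    exact ⟨e y, hmaps y hy, by simp [he]⟩
  have hbij' : Set.BijOn ψ' Sig Lam := hb.comp hbije
  have hcomp' : ∀ U ∈ Sig, U ⊂ ψ' U ∨ ψ' U ⊂ U := by
    intro U hU
    rcases eq_or_ne U S with rfl | hUS
    · rw [hψ'S]
      rcases hSor with ⟨hsa, -⟩ | ⟨hsb, -⟩
      · left
        rw [hsa]
        rcases hTor with ⟨-, hb'⟩ | ⟨-, hb'⟩ <;> rw [hb']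
        · exact h1.trans h2
        · exact h1
      · right
        rw [hsb]
        rcases hTor with ⟨-, hb'⟩ | ⟨-, hb'⟩ <;> rw [hb']
        · exact h3
        · exact h2.trans h3
    rcases eq_or_ne U T with rfl | hUT
    · rw [hψ'T]
      rcases hTor with ⟨hta, -⟩ | ⟨htb, -⟩
      · rw [hta]
        rcases hSor with ⟨-, hb'⟩ | ⟨-, hb'⟩ <;> rw [hb']
        · left; exact h2.trans h3
        · right; exact h1
      · rw [htb]
        rcases hSor with ⟨-, hb'⟩ | ⟨-, hb'⟩ <;> rw [hb']
        · left; exact h3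
        · right; exact h1.trans h2
    · rw [hψ'U U hUS hUT]
      exact hc U hU
  refine ⟨ψ', hbij', hcomp', ?_⟩
  -- card facts
  have c1 : A.card < A'.card := Finset.card_lt_card h1
  have c2 : A'.card < B'.card := Finset.card_lt_card h2
  have c3 : B'.card < B.card := Finset.card_lt_card h3
  have cAB : A.card < B.card := by omega
  -- bound on the new pair at S
  have hdS : (wop ψ' S).2.card - (wop ψ' S).1.card < B.card - A.card := by
    rcases hSor with ⟨hsa, -⟩ | ⟨hsb, -⟩
    · have hlt : S ⊂ ψ' S := by
        rw [hψ'S, hsa]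
        rcases hTor with ⟨-, hb'⟩ | ⟨-, hb'⟩ <;> rw [hb']
        · exact h1.trans h2
        · exact h1
      rw [wop_left ψ' S hlt]
      simp only
      rw [hψ'S, hsa]
      rcases hTor with ⟨-, hb'⟩ | ⟨-, hb'⟩ <;> rw [hb'] <;> omega
    · have hlt : ψ' S ⊂ S := by
        rw [hψ'S, hsb]
        rcases hTor with ⟨-, hb'⟩ | ⟨-, hb'⟩ <;> rw [hb']
        · exact h3
        · exact h2.trans h3
      rw [wop_right ψ' S hlt]
      simp only
      rw [hψ'S, hsb]
      rcases hTor with ⟨-, hb'⟩ | ⟨-, hb'⟩ <;> rw [hb'] <;> omega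
  -- bound on the new pair at T
  have hdT : (wop ψ' T).2.card - (wop ψ' T).1.card < B.card - A.card := by
    rcases hTor with ⟨hta, -⟩ | ⟨htb, -⟩
    · rcases hSor with ⟨-, hb'⟩ | ⟨-, hb'⟩
      · have hlt : T ⊂ ψ' T := by rw [hψ'T, hb', hta]; exact h2.trans h3
        rw [wop_left ψ' T hlt]
        simp only
        rw [hψ'T, hb', hta]; omega
      · have hlt : ψ' T ⊂ T := by rw [hψ'T, hb', hta]; exact h1
        rw [wop_right ψ' T hlt]
        simp only
        rw [hψ'T, hb', hta]; omega
    · rcases hSor with ⟨-, hb'⟩ | ⟨-, hb'⟩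
      · have hlt : T ⊂ ψ' T := by rw [hψ'T, hb', htb]; exact h3
        rw [wop_left ψ' T hlt]
        simp only
        rw [hψ'T, hb', htb]; omega
      · have hlt : ψ' T ⊂ T := by rw [hψ'T, hb', htb]; exact h1.trans h2
        rw [wop_right ψ' T hlt]
        simp only
        rw [hψ'T, hb', htb]; omega
  -- n is positive
  obtain ⟨x, -, -⟩ := Finset.exists_of_ssubset h1
  have hn : 0 < n := x.pos
  -- the sum decomposition
  set F := (Set.toFinite Sig).toFinset with hF
  have hSF : S ∈ F := by rw [hF, Set.Finite.mem_toFinset]; exact hS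
  have hTF : T ∈ (F.erase S) :=
    Finset.mem_erase.mpr ⟨Ne.symm hST, by rw [hF, Set.Finite.mem_toFinset]; exact hT⟩
  have hsum : ∀ f : Finset (Fin n) → ℕ,
      ∑ U ∈ F, f U = f S + f T + ∑ U ∈ (F.erase S).erase T, f U := by
    intro f
    rw [← Finset.add_sum_erase _ f hSF, ← Finset.add_sum_erase _ f hTF]
    ring
  have hrest : ∑ U ∈ (F.erase S).erase T,
        (n + 1) ^ ((wop ψ' U).2.card - (wop ψ' U).1.card)
      = ∑ U ∈ (F.erase S).erase T,
        (n + 1) ^ ((wop ψ U).2.card - (wop ψ U).1.card) := by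
    refine Finset.sum_congr rfl ?_
    intro U hU
    have hUT : U ≠ T := (Finset.mem_erase.mp hU).1
    have hUS : U ≠ S := (Finset.mem_erase.mp (Finset.mem_erase.mp hU).2).1
    have : wop ψ' U = wop ψ U := by unfold wop; rw [hψ'U U hUS hUT]
    rw [this]
  -- the key numerical inequality
  have hkey : (n + 1) ^ ((wop ψ' S).2.card - (wop ψ' S).1.card)
      + (n + 1) ^ ((wop ψ' T).2.card - (wop ψ' T).1.card)
      < (n + 1) ^ ((wop ψ S).2.card - (wop ψ S).1.card)
        + (n + 1) ^ ((wop ψ T).2.card - (wop ψ T).1.card) := by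
    rw [hwS, hwT]
    simp only
    set D := B.card - A.card with hD
    have hD1 : 1 ≤ D := by omega
    have b1 : (n + 1) ^ ((wop ψ' S).2.card - (wop ψ' S).1.card) ≤ (n + 1) ^ (D - 1) :=
      Nat.pow_le_pow_right (by omega) (by omega)
    have b2 : (n + 1) ^ ((wop ψ' T).2.card - (wop ψ' T).1.card) ≤ (n + 1) ^ (D - 1) :=
      Nat.pow_le_pow_right (by omega) (by omega)
    have b3 : 2 * (n + 1) ^ (D - 1) ≤ (n + 1) ^ D := by
      calc 2 * (n + 1) ^ (D - 1) ≤ (n + 1) * (n + 1) ^ (D - 1) :=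
            Nat.mul_le_mul_right _ (by omega)
        _ = (n + 1) ^ (D - 1 + 1) := (pow_succ' _ _).symm
        _ = (n + 1) ^ D := by rw [Nat.sub_add_cancel hD1]
    have b4 : 0 < (n + 1) ^ (B'.card - A'.card) := Nat.pow_pos (by omega)
    omega
  unfold weight
  rw [← hF, hsum, hsum, hrest]
  exact Nat.add_lt_add_right hkey _

end NonNestedAux

/-- Given two disjoint proper families `Σ` and `Λ` of subsets of `[n]` with a
comparable matching `φ : Σ → Λ`, there exists a non-nested comparable matching
`ψ : Σ → Λ`. -/
theorem exists_non_nested_comparable_matching (n : ℕ)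
    (Sig Lam : Set (Finset (Fin n)))
    (hSig : ∀ S ∈ Sig, S ≠ ∅ ∧ S ≠ Finset.univ)
    (hLam : ∀ S ∈ Lam, S ≠ ∅ ∧ S ≠ Finset.univ)
    (hdisj : Disjoint Sig Lam)
    (φ : Finset (Fin n) → Finset (Fin n)) (hφ : Set.BijOn φ Sig Lam)
    (hcomp : ∀ S ∈ Sig, S ⊂ φ S ∨ φ S ⊂ S) :
    ∃ ψ : Finset (Fin n) → Finset (Fin n),
      Set.BijOn ψ Sig Lam ∧ (∀ S ∈ Sig, S ⊂ ψ S ∨ ψ S ⊂ S) ∧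
      ∀ S ∈ Sig, ∀ T ∈ Sig, S ≠ T → ¬ NestedPairs (wop ψ S) (wop ψ T) := by
  classical
  suffices h : ∀ k (ψ : Finset (Fin n) → Finset (Fin n)),
      NonNestedAux.weight Sig ψ ≤ k → Set.BijOn ψ Sig Lam →
      (∀ S ∈ Sig, S ⊂ ψ S ∨ ψ S ⊂ S) →
      ∃ ψ' : Finset (Fin n) → Finset (Fin n),
        Set.BijOn ψ' Sig Lam ∧ (∀ S ∈ Sig, S ⊂ ψ' S ∨ ψ' S ⊂ S) ∧
        ∀ S ∈ Sig, ∀ T ∈ Sig, S ≠ T → ¬ NestedPairs (wop ψ' S) (wop ψ' T) by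
    exact h (NonNestedAux.weight Sig φ) φ le_rfl hφ hcomp
  intro k
  induction k using Nat.strong_induction_on with
  | _ k ih =>
    intro ψ hw hb hc
    by_cases hn : ∃ S ∈ Sig, ∃ T ∈ Sig, S ≠ T ∧ NestedPairs (wop ψ S) (wop ψ T)
    · obtain ⟨S, hS, T, hT, hST, hnp⟩ := hn
      rcases hnp with h' | h'
      · obtain ⟨ψ', hb', hc', hlt⟩ :=
          NonNestedAux.swap_step Sig Lam ψ hb hc S T hS hT h'
        exact ih (NonNestedAux.weight Sig ψ') (lt_of_lt_of_le hlt hw) ψ' le_rfl hb' hc'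
      · obtain ⟨ψ', hb', hc', hlt⟩ :=
          NonNestedAux.swap_step Sig Lam ψ hb hc T S hT hS h'
        exact ih (NonNestedAux.weight Sig ψ') (lt_of_lt_of_le hlt hw) ψ' le_rfl hb' hc'
    · push_neg at hn
      exact ⟨ψ, hb, hc, fun S hS T hT hST => hn S hS T hT hST⟩
end

section
/- For arbitrary n and any tuple α = (α_1,...,α_t) of 0's and 1's with n ≥ t, the power set 2^{[n]} decomposes as the disjoint union of the single set with support vector [α]^∞_{≤n} and, for i = 1,...,t, the families ⟨\barα_i α_{i+1} ... α_t [α]^*⟩ of subsets whose support vector ends with the string \barα_i α_{i+1}...α_t followed by some number (possibly zero) of copies of α. -/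
/-- `k` concatenated copies of the binary string `γ`. -/
def reps (γ : List Bool) (k : ℕ) : List Bool := (List.replicate k γ).flatten

/-- The support vector `v` ends (on the right) with the string `β`. -/
def EndsWith (v β : List Bool) : Prop := ∃ γ : List Bool, v = γ ++ β


namespace PSDaux

/-- the periodic pattern bit at position `j` (from the left), period `β`. -/
def patf (β : List Bool) (j : ℕ) : Bool := β.getD (j % β.length) false

/-- the first `m` bits of the infinite periodic word with period `β`. -/
def pat (β : List Bool) (m : ℕ) : List Bool := (List.range m).map (patf β)

@[simp] lemma pat_zero (β : List Bool) : pat β 0 = [] := by simp [pat]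

@[simp] lemma pat_length (β : List Bool) (m : ℕ) : (pat β m).length = m := by simp [pat]

lemma pat_getElem (β : List Bool) {m j : ℕ} (h : j < m) :
    (pat β m)[j]'(by simpa using h) = patf β j := by
  simp [pat]

@[simp] lemma reps_zero (γ : List Bool) : reps γ 0 = [] := by simp [reps]

lemma reps_succ (γ : List Bool) (k : ℕ) : reps γ (k+1) = γ ++ reps γ k := by
  simp [reps, List.replicate_succ]

lemma reps_succ' (γ : List Bool) (k : ℕ) : reps γ (k+1) = reps γ k ++ γ := by
  simp [reps, List.replicate_succ']

lemma length_reps (γ : List Bool) (k : ℕ) : (reps γ k).length = k * γ.length := by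
  induction k with
  | zero => simp
  | succ k ih => rw [reps_succ]; simp [ih]; ring

lemma reps_reverse (γ : List Bool) (k : ℕ) : (reps γ k).reverse = reps γ.reverse k := by
  induction k with
  | zero => simp
  | succ k ih => rw [reps_succ', reps_succ]; simp [ih]

lemma pat_self (β : List Bool) : pat β β.length = β := by
  apply List.ext_getElem
  · simp
  · intro j h1 h2
    rw [pat_getElem β (by simpa using h1)]
    rw [patf, Nat.mod_eq_of_lt h2, List.getD_eq_getElem _ _ h2]

lemma pat_period_add (β : List Bool) (m : ℕ) : pat β (β.length + m) = β ++ pat β m := by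
  rw [pat, List.range_add, List.map_append, List.map_map]
  congr 1
  · exact pat_self β
  · apply List.map_congr_left
    intro a _
    simp [patf, Nat.add_mod_left]

lemma pat_reps_add (β : List Bool) (k m : ℕ) :
    pat β (k * β.length + m) = reps β k ++ pat β m := by
  induction k with
  | zero => simp
  | succ k ih =>
    have : (k+1) * β.length + m = β.length + (k * β.length + m) := by ring
    rw [this, pat_period_add, ih, reps_succ, List.append_assoc]

lemma pat_reps (β : List Bool) (k : ℕ) : reps β k = pat β (k * β.length) := by
  simpa using (pat_reps_add β k 0).symm

lemma pat_take (β : List Bool) {m M : ℕ} (h : m ≤ M) : (pat β M).take m = pat β m := by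
  rw [pat, pat, ← List.map_take, List.take_range, Nat.min_eq_left h]

lemma pat_take_of_le (β : List Bool) {r : ℕ} (h : r ≤ β.length) : β.take r = pat β r := by
  conv_lhs => rw [← pat_self β]
  exact pat_take β h

/-- mismatch at position `m`: `w` starts with `pat β m` followed by the wrong bit. -/
def Mis (β w : List Bool) (m : ℕ) : Prop := ∃ rest, w = pat β m ++ (!patf β m) :: rest

lemma mis_getD {β w : List Bool} {m : ℕ} (h : Mis β w m) :
    m < w.length ∧ w.getD m false = !patf β m ∧ ∀ e < m, w.getD e false = patf β e := by
  obtain ⟨rest, rfl⟩ := h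
  refine ⟨by simp, ?_, ?_⟩
  · rw [List.getD_eq_getElem _ _ (by simp),
      List.getElem_append_right (by simp)]
    simp
  · intro e he
    rw [List.getD_append _ _ _ _ (by simpa using he),
      List.getD_eq_getElem _ _ (by simpa using he), pat_getElem β he]

lemma mis_of_getD {β w : List Bool} {m : ℕ} (hm : m < w.length)
    (h1 : w.getD m false = !patf β m) (h2 : ∀ e < m, w.getD e false = patf β e) :
    Mis β w m := by
  refine ⟨w.drop (m+1), ?_⟩
  have htake : w.take (m+1) = pat β m ++ [!patf β m] := by
    apply List.ext_getElem
    · simp; omega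
    · intro j hj1 hj2
      rw [List.getElem_take]
      rcases Nat.lt_or_ge j m with hj | hj
      · rw [List.getElem_append_left (by simpa using hj), pat_getElem β hj,
          ← List.getD_eq_getElem _ false, h2 j hj]
      · have hjm : j = m := by simp at hj1; omega
        subst hjm
        rw [List.getElem_append_right (by simp)]
        have hw : w[j] = w.getD j false := (List.getD_eq_getElem _ _ hm).symm
        simp only [List.getElem_singleton, Nat.sub_self] at *
        rw [hw, h1]
  conv_lhs => rw [← List.take_append_drop (m+1) w]
  rw [htake, List.append_assoc]
  rfl

lemma mis_unique {β w : List Bool} {m m' : ℕ} (h : Mis β w m) (h' : Mis β w m') : m = m' := by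
  obtain ⟨_, h1, h2⟩ := mis_getD h
  obtain ⟨_, h1', h2'⟩ := mis_getD h'
  by_contra hne
  rcases Nat.lt_or_ge m m' with hlt | hge
  · have := h2' m hlt
    rw [h1] at this
    simp at this
  · have hlt : m' < m := by omega
    have := h2 m' hlt
    rw [h1'] at this
    simp at this

lemma exists_mis_or_pat (β w : List Bool) :
    w = pat β w.length ∨ ∃ m, Mis β w m := by
  by_cases hc : ∀ j < w.length, w.getD j false = patf β j
  · left
    apply List.ext_getElem
    · simp
    · intro j h1 h2
      rw [pat_getElem β (by simpa using h2), ← List.getD_eq_getElem _ false, hc j h1]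
  · right
    push_neg at hc
    obtain ⟨j, hj, hne⟩ := hc
    have hex : ∃ j, w.getD j false ≠ patf β j := ⟨j, hne⟩
    set m := Nat.find hex with hm
    refine ⟨m, mis_of_getD ?_ ?_ ?_⟩
    · exact lt_of_le_of_lt (Nat.find_min' hex hne) hj
    · have := Nat.find_spec hex
      revert this
      cases w.getD m false <;> cases patf β m <;> simp
    · intro e he
      have := Nat.find_min hex he
      simpa using this

end PSDaux
namespace PSDaux

lemma P_iff (α v : List Bool) {i : ℕ} (hi : i < α.length) :
    (∃ k, EndsWith v ([!(α.getD i false)] ++ α.drop (i + 1) ++ reps α k)) ↔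
    ∃ k, Mis α.reverse v.reverse (k * α.length + (α.length - 1 - i)) := by
  set β := α.reverse with hβ
  set t := α.length with ht
  have hβt : β.length = t := by simp [hβ, ht]
  set r := t - 1 - i with hr
  have hrt : r < t := by omega
  apply exists_congr
  intro k
  set m := k * t + r with hm
  have hx : α.getD i false = patf β m := by
    have h1 : m % β.length = r := by
      rw [hβt, hm, Nat.mul_comm, Nat.mul_add_mod, Nat.mod_eq_of_lt hrt]
    rw [patf, h1]
    have h2 : r < β.length := by omega
    rw [List.getD_eq_getElem _ _ h2, List.getD_eq_getElem _ _ hi]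
    rw [List.getElem_reverse]
    congr 1
    omega
  have hsrev : ([!(α.getD i false)] ++ α.drop (i + 1) ++ reps α k).reverse
      = pat β m ++ [!patf β m] := by
    rw [List.reverse_append, List.reverse_append, reps_reverse, List.reverse_drop,
      List.reverse_singleton]
    have h3 : α.length - (i + 1) = r := by omega
    rw [h3, ← hβ, pat_take_of_le β (by omega), ← List.append_assoc,
      ← pat_reps_add β k r, hβt, ← hm, hx]
  constructor
  · rintro ⟨γ, rfl⟩
    refine ⟨γ.reverse, ?_⟩
    rw [List.reverse_append, hsrev, List.append_assoc]
    rfl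
  · rintro ⟨rest, hw⟩
    refine ⟨rest.reverse, ?_⟩
    have : v.reverse = (pat β m ++ [!patf β m]) ++ rest := by
      rw [hw]; simp
    have h4 := congrArg List.reverse this
    rw [List.reverse_reverse, List.reverse_append, ← hsrev, List.reverse_reverse] at h4
    exact h4

end PSDaux


open PSDaux in
/-- For any tuple `α = (α_1,...,α_t)` of bits with `1 ≤ t ≤ n`, the set of
support vectors of length `n` decomposes as the disjoint union of the single
vector `[α]^∞_{≤n}` (the right-aligned truncation of infinitely many copies of
`α`) and, for `i = 1,...,t`, the families of vectors ending with
`¬α_i, α_{i+1},...,α_t` followed by some number of copies of `α`. -/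
theorem power_set_decomposition (n : ℕ) (α : List Bool) (hα : α ≠ [])
    (hlen : α.length ≤ n) (v : List Bool) (hv : v.length = n) :
    let trunc : List Bool := (reps α n).drop (n * α.length - n)
    let P : ℕ → Prop := fun i =>
      ∃ k, EndsWith v ([!(α.getD i false)] ++ α.drop (i + 1) ++ reps α k)
    (v = trunc ∨ ∃ i < α.length, P i) ∧
    (v = trunc → ∀ i < α.length, ¬ P i) ∧
    (∀ i < α.length, ∀ j < α.length, P i → P j → i = j) := by
  intro trunc P
  set β := α.reverse with hβ
  set t := α.length with ht
  have ht0 : 0 < t := List.length_pos_iff.mpr hα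
  have hβt : β.length = t := by simp [hβ, ht]
  set w := v.reverse with hw
  have hwn : w.length = n := by simp [hw, hv]
  have htrunc_rev : trunc.reverse = pat β n := by
    show ((reps α n).drop (n * α.length - n)).reverse = pat β n
    rw [List.reverse_drop, length_reps, reps_reverse]
    have hle : n ≤ n * α.length := Nat.le_mul_of_pos_right n ht0
    have h1 : n * α.length - (n * α.length - n) = n := by omega
    rw [h1, pat_reps]
    exact pat_take β (by rw [hβt]; exact hle)
  have htr : v = trunc ↔ w = pat β n := by
    rw [← List.reverse_inj, htrunc_rev]
  have hPiff : ∀ i, i < t → (P i ↔ ∃ k, Mis β w (k * t + (t - 1 - i))) := by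
    intro i hi
    exact P_iff α v hi
  refine ⟨?_, ?_, ?_⟩
  · rcases exists_mis_or_pat β w with h | ⟨m, hm⟩
    · left; rw [htr, ← hwn]; exact h
    · right
      have hmn : m < n := hwn ▸ (mis_getD hm).1
      have hrt : m % t < t := Nat.mod_lt _ ht0
      refine ⟨t - 1 - m % t, by omega, ?_⟩
      rw [hPiff _ (by omega)]
      refine ⟨m / t, ?_⟩
      have h5 : t - 1 - (t - 1 - m % t) = m % t := by omega
      have h6 : m / t * t + m % t = m := by
        rw [Nat.mul_comm]; exact Nat.div_add_mod m t
      rw [h5, h6]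
      exact hm
  · intro hvt i hi hPi
    rw [hPiff i hi] at hPi
    obtain ⟨k, hk⟩ := hPi
    obtain ⟨hmlt, h1, -⟩ := mis_getD hk
    rw [htr] at hvt
    rw [hvt] at h1 hmlt
    set m := k * t + (t - 1 - i)
    rw [List.getD_eq_getElem _ _ hmlt, pat_getElem β (by simpa using hmlt)] at h1
    simp at h1
  · intro i hi j hj hPi hPj
    rw [hPiff i hi] at hPi
    rw [hPiff j hj] at hPj
    obtain ⟨k, hk⟩ := hPi
    obtain ⟨k', hk'⟩ := hPj
    have heq := mis_unique hk hk'
    have h7 : (k * t + (t - 1 - i)) % t = t - 1 - i := by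
      rw [Nat.mul_comm, Nat.mul_add_mod, Nat.mod_eq_of_lt (by omega)]
    have h8 : (k' * t + (t - 1 - j)) % t = t - 1 - j := by
      rw [Nat.mul_comm, Nat.mul_add_mod, Nat.mod_eq_of_lt (by omega)]
    have := congrArg (· % t) heq
    simp only [h7, h8] at this
    omega
end

section
/- For every p ≥ 2, the family ⟨0[01]^*⟩ of subsets of [2p] decomposes as the disjoint union ⟨10[01]^*⟩ ⊔ ⟨1[10]^*00[01]^*⟩ ⊔ ⟨00[10]^*00[01]^*⟩ ⊔ {[10]^k 00 [01]^{p-k-1} : 0 ≤ k ≤ p-1}. -/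
/-- The four alternatives are pairwise disjoint. -/
def PairwiseDisjoint4 (A B C D : Prop) : Prop :=
  ¬(A ∧ B) ∧ ¬(A ∧ C) ∧ ¬(A ∧ D) ∧ ¬(B ∧ C) ∧ ¬(B ∧ D) ∧ ¬(C ∧ D)

namespace Dec001

lemma reps_zero (γ : List Bool) : reps γ 0 = [] := rfl

lemma reps_succ (γ : List Bool) (k : ℕ) : reps γ (k+1) = γ ++ reps γ k := by
  simp [reps, List.replicate_succ]

lemma reps_succ' (γ : List Bool) (k : ℕ) : reps γ (k+1) = reps γ k ++ γ := by
  simp [reps, List.replicate_succ']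

lemma reps_reverse (γ : List Bool) (k : ℕ) : (reps γ k).reverse = reps γ.reverse k := by
  induction k with
  | zero => simp [reps_zero]
  | succ n ih => rw [reps_succ', List.reverse_append, ih, reps_succ]

lemma reps_length (γ : List Bool) (k : ℕ) : (reps γ k).length = k * γ.length := by
  induction k with
  | zero => simp [reps_zero]
  | succ n ih => rw [reps_succ]; simp [ih]; ring

/-! The five predicates on the reversed vector. -/

def LP (r : List Bool) : Prop := ∃ k, reps [true,false] k ++ [false] <+: r
def AP (r : List Bool) : Prop := ∃ k, reps [true,false] k ++ [false, true] <+: r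
def BP (r : List Bool) : Prop :=
  ∃ m k, reps [true,false] k ++ false :: false :: (reps [false,true] m ++ [true]) <+: r
def CP (r : List Bool) : Prop :=
  ∃ m k, reps [true,false] k ++ false :: false :: (reps [false,true] m ++ [false, false]) <+: r
def DP (r : List Bool) : Prop :=
  ∃ m k, r = reps [true,false] k ++ false :: false :: reps [false,true] m

/-! Reduction lemmas for stripping a leading `true :: false`. -/

lemma ek_tf (Y r : List Bool) :
    (∃ k, reps [true,false] k ++ false :: Y <+: true :: false :: r) ↔
    (∃ k, reps [true,false] k ++ false :: Y <+: r) := by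
  constructor
  · rintro ⟨k, hk⟩
    cases k with
    | zero =>
      simp only [reps_zero, List.nil_append, List.cons_prefix_cons] at hk
      simp at hk
    | succ k =>
      refine ⟨k, ?_⟩
      simp only [reps_succ, List.cons_append, List.nil_append,
        List.cons_prefix_cons, true_and] at hk
      exact hk
  · rintro ⟨k, hk⟩
    refine ⟨k+1, ?_⟩
    simp only [reps_succ, List.cons_append, List.nil_append,
      List.cons_prefix_cons, true_and]
    exact hk

lemma ek_tt (Y r : List Bool) :
    ¬ (∃ k, reps [true,false] k ++ false :: Y <+: true :: true :: r) := by
  rintro ⟨k, hk⟩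
  cases k with
  | zero =>
    simp only [reps_zero, List.nil_append, List.cons_prefix_cons] at hk
    simp at hk
  | succ k =>
    simp only [reps_succ, List.cons_append, List.nil_append,
      List.cons_prefix_cons] at hk
    simp at hk

lemma ek_nil (Y : List Bool) :
    ¬ (∃ k, reps [true,false] k ++ false :: Y <+: []) := by
  rintro ⟨k, hk⟩
  have := List.prefix_nil.mp hk
  simp at this

lemma ekeq_tf (Y r : List Bool) :
    (∃ k, true :: false :: r = reps [true,false] k ++ false :: Y) ↔
    (∃ k, r = reps [true,false] k ++ false :: Y) := by
  constructor
  · rintro ⟨k, hk⟩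
    cases k with
    | zero => simp [reps_zero] at hk
    | succ k =>
      refine ⟨k, ?_⟩
      simp only [reps_succ, List.cons_append, List.nil_append, List.cons.injEq,
        true_and] at hk
      exact hk
  · rintro ⟨k, hk⟩
    refine ⟨k+1, ?_⟩
    simp only [reps_succ, List.cons_append, List.nil_append, List.cons.injEq, true_and]
    exact hk

lemma ekeq_tt (Y r : List Bool) :
    ¬ (∃ k, true :: true :: r = reps [true,false] k ++ false :: Y) := by
  rintro ⟨k, hk⟩
  cases k with
  | zero => simp [reps_zero] at hk
  | succ k =>
    simp only [reps_succ, List.cons_append, List.nil_append, List.cons.injEq] at hk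
    simp at hk

/-! Predicate-level reductions. -/

lemma LP_tf (r : List Bool) : LP (true :: false :: r) ↔ LP r := ek_tf [] r
lemma AP_tf (r : List Bool) : AP (true :: false :: r) ↔ AP r := ek_tf [true] r
lemma BP_tf (r : List Bool) : BP (true :: false :: r) ↔ BP r :=
  exists_congr fun _ => ek_tf _ r
lemma CP_tf (r : List Bool) : CP (true :: false :: r) ↔ CP r :=
  exists_congr fun _ => ek_tf _ r
lemma DP_tf (r : List Bool) : DP (true :: false :: r) ↔ DP r :=
  exists_congr fun _ => ekeq_tf _ r

/-! The key first-mismatch lemma. -/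

lemma key : ∀ k k' (Y Y' : List Bool),
    reps [true,false] k ++ false :: Y <+: reps [true,false] k' ++ false :: Y' →
    k = k' ∧ Y <+: Y' := by
  intro k
  induction k with
  | zero =>
    intro k' Y Y' h
    cases k' with
    | zero =>
      simp only [reps_zero, List.nil_append, List.cons_prefix_cons, true_and] at h
      exact ⟨rfl, h⟩
    | succ k' =>
      simp only [reps_zero, reps_succ, List.cons_append, List.nil_append,
        List.cons_prefix_cons] at h
      simp at h
  | succ k ih =>
    intro k' Y Y' h
    cases k' with
    | zero =>
      simp only [reps_zero, reps_succ, List.cons_append, List.nil_append,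
        List.cons_prefix_cons] at h
      simp at h
    | succ k' =>
      simp only [reps_succ, List.cons_append, List.nil_append,
        List.cons_prefix_cons, true_and] at h
      obtain ⟨hk, hY⟩ := ih k' Y Y' h
      exact ⟨by omega, hY⟩

/-! Second-level lemmas about `(01)^m` patterns. -/

lemma L2 : ∀ m m' (U U' : List Bool),
    ¬ (reps [false,true] m ++ true :: U <+: reps [false,true] m' ++ false :: false :: U') := by
  intro m
  induction m with
  | zero =>
    intro m' U U' h
    cases m' <;>
      · simp only [reps_zero, reps_succ, List.cons_append, List.nil_append,
          List.cons_prefix_cons] at h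
        simp at h
  | succ m ih =>
    intro m' U U' h
    cases m' with
    | zero =>
      simp only [reps_zero, reps_succ, List.cons_append, List.nil_append,
        List.cons_prefix_cons] at h
      simp at h
    | succ m' =>
      simp only [reps_succ, List.cons_append, List.nil_append,
        List.cons_prefix_cons, true_and] at h
      exact ih m' U U' h

lemma L2' : ∀ m m' (U U' : List Bool),
    ¬ (reps [false,true] m ++ false :: false :: U <+: reps [false,true] m' ++ true :: U') := by
  intro m
  induction m with
  | zero =>
    intro m' U U' h
    cases m' <;>
      · simp only [reps_zero, reps_succ, List.cons_append, List.nil_append,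
          List.cons_prefix_cons] at h
        simp at h
  | succ m ih =>
    intro m' U U' h
    cases m' with
    | zero =>
      simp only [reps_zero, reps_succ, List.cons_append, List.nil_append,
        List.cons_prefix_cons] at h
      simp at h
    | succ m' =>
      simp only [reps_succ, List.cons_append, List.nil_append,
        List.cons_prefix_cons, true_and] at h
      exact ih m' U U' h

lemma L3 : ∀ m m' (U : List Bool),
    ¬ (reps [false,true] m ++ true :: U <+: reps [false,true] m') := by
  intro m
  induction m with
  | zero =>
    intro m' U h
    cases m' with
    | zero =>
      rw [reps_zero] at h
      exact absurd (List.prefix_nil.mp h) (by simp)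
    | succ m' =>
      simp only [reps_zero, reps_succ, List.cons_append, List.nil_append,
        List.cons_prefix_cons] at h
      simp at h
  | succ m ih =>
    intro m' U h
    cases m' with
    | zero =>
      rw [reps_zero] at h
      exact absurd (List.prefix_nil.mp h) (by simp)
    | succ m' =>
      simp only [reps_succ, List.cons_append, List.nil_append,
        List.cons_prefix_cons, true_and] at h
      exact ih m' U h

lemma L4 : ∀ m m' (U : List Bool),
    ¬ (reps [false,true] m ++ false :: false :: U <+: reps [false,true] m') := by
  intro m
  induction m with
  | zero =>
    intro m' U h
    cases m' with
    | zero =>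
      rw [reps_zero] at h
      exact absurd (List.prefix_nil.mp h) (by simp)
    | succ m' =>
      simp only [reps_zero, reps_succ, List.cons_append, List.nil_append,
        List.cons_prefix_cons] at h
      simp at h
  | succ m ih =>
    intro m' U h
    cases m' with
    | zero =>
      rw [reps_zero] at h
      exact absurd (List.prefix_nil.mp h) (by simp)
    | succ m' =>
      simp only [reps_succ, List.cons_append, List.nil_append,
        List.cons_prefix_cons, true_and] at h
      exact ih m' U h

/-! Totality of the three sub-alternatives after a `false :: false`. -/

lemma subTotal : ∀ n (s : List Bool), s.length ≤ n → Even s.length →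
    (∃ m, reps [false,true] m ++ [true] <+: s) ∨
    (∃ m, reps [false,true] m ++ [false, false] <+: s) ∨
    (∃ m, s = reps [false,true] m) := by
  intro n
  induction n with
  | zero =>
    intro s hs _
    have : s = [] := List.eq_nil_of_length_eq_zero (by omega)
    exact Or.inr (Or.inr ⟨0, by simp [this, reps_zero]⟩)
  | succ n ih =>
    intro s hs he
    match s, hs, he with
    | [], _, _ => exact Or.inr (Or.inr ⟨0, by simp [reps_zero]⟩)
    | [c], _, he => simp at he
    | true :: d :: s', _, _ =>
      refine Or.inl ⟨0, ?_⟩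
      simp only [reps_zero, List.nil_append]
      exact ⟨d :: s', rfl⟩
    | false :: false :: s', _, _ =>
      refine Or.inr (Or.inl ⟨0, ?_⟩)
      simp only [reps_zero, List.nil_append]
      exact ⟨s', rfl⟩
    | false :: true :: s', hs2, he2 =>
      have hs' : s'.length ≤ n := by simp at hs2; omega
      have he' : Even s'.length := by
        rcases he2 with ⟨w, hw⟩
        simp at hw
        exact ⟨w - 1, by omega⟩
      rcases ih s' hs' he' with ⟨m, h⟩ | ⟨m, h⟩ | ⟨m, h⟩
      · refine Or.inl ⟨m + 1, ?_⟩
        simp only [reps_succ, List.cons_append, List.nil_append, List.cons_prefix_cons,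
          true_and]
        exact h
      · refine Or.inr (Or.inl ⟨m + 1, ?_⟩)
        simp only [reps_succ, List.cons_append, List.nil_append, List.cons_prefix_cons,
          true_and]
        exact h
      · refine Or.inr (Or.inr ⟨m + 1, ?_⟩)
        simp only [reps_succ, List.cons_append, List.nil_append, List.cons.injEq, true_and]
        exact h

/-! Completeness. -/

lemma completeness : ∀ n (r : List Bool), r.length ≤ n → Even r.length →
    LP r → AP r ∨ BP r ∨ CP r ∨ DP r := by
  intro n
  induction n with
  | zero =>
    intro r hr _ hl
    have hre : r = [] := List.eq_nil_of_length_eq_zero (by omega)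
    rw [hre] at hl
    exact absurd hl (ek_nil [])
  | succ n ih =>
    intro r hr he hl
    match r, hr, he, hl with
    | [], _, _, hl => exact absurd hl (ek_nil [])
    | [c], _, he, _ => simp at he
    | false :: true :: s, _, _, _ =>
      refine Or.inl ⟨0, ?_⟩
      simp only [reps_zero, List.nil_append]
      exact ⟨s, rfl⟩
    | false :: false :: s, hr2, he2, _ =>
      have hs : s.length ≤ n := by simp at hr2; omega
      have he' : Even s.length := by
        rcases he2 with ⟨w, hw⟩
        simp at hw
        exact ⟨w - 1, by omega⟩
      rcases subTotal n s hs he' with ⟨m, h⟩ | ⟨m, h⟩ | ⟨m, h⟩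
      · refine Or.inr (Or.inl ⟨m, 0, ?_⟩)
        simp only [reps_zero, List.nil_append, List.cons_prefix_cons, true_and]
        exact h
      · refine Or.inr (Or.inr (Or.inl ⟨m, 0, ?_⟩))
        simp only [reps_zero, List.nil_append, List.cons_prefix_cons, true_and]
        exact h
      · refine Or.inr (Or.inr (Or.inr ⟨m, 0, ?_⟩))
        simp only [reps_zero, List.nil_append, List.cons.injEq, true_and]
        exact h
    | true :: false :: s, hr2, he2, hl2 =>
      have hs : s.length ≤ n := by simp at hr2; omega
      have he' : Even s.length := by
        rcases he2 with ⟨w, hw⟩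
        simp at hw
        exact ⟨w - 1, by omega⟩
      have hl' : LP s := (LP_tf s).mp hl2
      rcases ih s hs he' hl' with h | h | h | h
      · exact Or.inl ((AP_tf s).mpr h)
      · exact Or.inr (Or.inl ((BP_tf s).mpr h))
      · exact Or.inr (Or.inr (Or.inl ((CP_tf s).mpr h)))
      · exact Or.inr (Or.inr (Or.inr ((DP_tf s).mpr h)))
    | true :: true :: s, _, _, hl2 => exact absurd hl2 (ek_tt [] s)

/-! Soundness: each alternative implies the left side. -/

lemma AP_LP {r : List Bool} (h : AP r) : LP r := by
  obtain ⟨k, hk⟩ := h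
  refine ⟨k, List.IsPrefix.trans ⟨[true], ?_⟩ hk⟩
  simp

lemma BP_LP {r : List Bool} (h : BP r) : LP r := by
  obtain ⟨m, k, hk⟩ := h
  refine ⟨k, List.IsPrefix.trans ⟨false :: (reps [false,true] m ++ [true]), ?_⟩ hk⟩
  simp

lemma CP_LP {r : List Bool} (h : CP r) : LP r := by
  obtain ⟨m, k, hk⟩ := h
  refine ⟨k, List.IsPrefix.trans ⟨false :: (reps [false,true] m ++ [false,false]), ?_⟩ hk⟩
  simp

lemma DP_LP {r : List Bool} (h : DP r) : LP r := by
  obtain ⟨m, k, hk⟩ := h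
  refine ⟨k, ⟨false :: reps [false,true] m, ?_⟩⟩
  rw [hk]; simp

/-! Disjointness. -/

lemma notAB {r : List Bool} : ¬ (AP r ∧ BP r) := by
  rintro ⟨⟨k, ha⟩, m, k', hb⟩
  have ha' : reps [true,false] k ++ false :: [true] <+: r := ha
  have hb' : reps [true,false] k' ++
      false :: (false :: (reps [false,true] m ++ [true])) <+: r := hb
  rcases List.prefix_or_prefix_of_prefix ha' hb' with h | h
  · have := (key _ _ _ _ h).2
    simp only [List.cons_prefix_cons] at this
    simp at this
  · have := (key _ _ _ _ h).2
    simp only [List.cons_prefix_cons] at this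
    simp at this

lemma notAC {r : List Bool} : ¬ (AP r ∧ CP r) := by
  rintro ⟨⟨k, ha⟩, m, k', hc⟩
  have ha' : reps [true,false] k ++ false :: [true] <+: r := ha
  have hc' : reps [true,false] k' ++
      false :: (false :: (reps [false,true] m ++ [false,false])) <+: r := hc
  rcases List.prefix_or_prefix_of_prefix ha' hc' with h | h
  · have := (key _ _ _ _ h).2
    simp only [List.cons_prefix_cons] at this
    simp at this
  · have := (key _ _ _ _ h).2
    simp only [List.cons_prefix_cons] at this
    simp at this

lemma notAD {r : List Bool} : ¬ (AP r ∧ DP r) := by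
  rintro ⟨⟨k, ha⟩, m, k', hd⟩
  rw [hd] at ha
  have ha' : reps [true,false] k ++ false :: [true] <+:
      reps [true,false] k' ++ false :: (false :: reps [false,true] m) := ha
  have := (key _ _ _ _ ha').2
  simp only [List.cons_prefix_cons] at this
  simp at this

lemma notBC {r : List Bool} : ¬ (BP r ∧ CP r) := by
  rintro ⟨⟨m, k, hb⟩, m', k', hc⟩
  have hb' : reps [true,false] k ++
      false :: (false :: (reps [false,true] m ++ true :: [])) <+: r := hb
  have hc' : reps [true,false] k' ++
      false :: (false :: (reps [false,true] m' ++ false :: false :: [])) <+: r := hc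
  rcases List.prefix_or_prefix_of_prefix hb' hc' with h | h
  · have := (key _ _ _ _ h).2
    simp only [List.cons_prefix_cons, true_and] at this
    exact L2 m m' _ _ this
  · have := (key _ _ _ _ h).2
    simp only [List.cons_prefix_cons, true_and] at this
    exact L2' m' m _ _ this

lemma notBD {r : List Bool} : ¬ (BP r ∧ DP r) := by
  rintro ⟨⟨m, k, hb⟩, m', k', hd⟩
  rw [hd] at hb
  have hb' : reps [true,false] k ++
      false :: (false :: (reps [false,true] m ++ true :: [])) <+:
      reps [true,false] k' ++ false :: (false :: reps [false,true] m') := hb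
  have := (key _ _ _ _ hb').2
  simp only [List.cons_prefix_cons, true_and] at this
  exact L3 m m' _ this

lemma notCD {r : List Bool} : ¬ (CP r ∧ DP r) := by
  rintro ⟨⟨m, k, hc⟩, m', k', hd⟩
  rw [hd] at hc
  have hc' : reps [true,false] k ++
      false :: (false :: (reps [false,true] m ++ false :: false :: [])) <+:
      reps [true,false] k' ++ false :: (false :: reps [false,true] m') := hc
  have := (key _ _ _ _ hc').2
  simp only [List.cons_prefix_cons, true_and] at this
  exact L4 m m' _ this

/-! Bridging to `EndsWith` via reversal. -/

lemma endsWith_iff (v β : List Bool) : EndsWith v β ↔ β.reverse <+: v.reverse := by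
  constructor
  · rintro ⟨γ, rfl⟩
    exact ⟨γ.reverse, by rw [← List.reverse_append]⟩
  · rintro ⟨t, ht⟩
    refine ⟨t.reverse, ?_⟩
    have h2 := congrArg List.reverse ht
    simpa using h2.symm

lemma revL (k : ℕ) :
    ([false] ++ reps [false,true] k).reverse = reps [true,false] k ++ [false] := by
  simp [reps_reverse]

lemma revA (k : ℕ) :
    ([true, false] ++ reps [false,true] k).reverse = reps [true,false] k ++ [false, true] := by
  simp [reps_reverse]

lemma revB (m k : ℕ) :
    ([true] ++ reps [true,false] m ++ [false,false] ++ reps [false,true] k).reverse =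
      reps [true,false] k ++ false :: false :: (reps [false,true] m ++ [true]) := by
  simp [reps_reverse]

lemma revC (m k : ℕ) :
    ([false,false] ++ reps [true,false] m ++ [false,false] ++ reps [false,true] k).reverse =
      reps [true,false] k ++ false :: false :: (reps [false,true] m ++ [false, false]) := by
  simp [reps_reverse]

end Dec001

open Dec001 in
/-- For every `p ≥ 2`, the family `⟨0[01]^*⟩` of subsets of `[2p]` decomposes as
the disjoint union
`⟨10[01]^*⟩ ⊔ ⟨1[10]^*00[01]^*⟩ ⊔ ⟨00[10]^*00[01]^*⟩ ⊔ {[10]^k 00 [01]^{p-k-1} : 0 ≤ k ≤ p-1}`. -/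
theorem decomposition_001 (p : ℕ) (hp : 2 ≤ p) (v : List Bool)
    (hv : v.length = 2 * p) :
    ((∃ k, EndsWith v ([false] ++ reps [false, true] k)) ↔
      ((∃ k, EndsWith v ([true, false] ++ reps [false, true] k)) ∨
       (∃ m k, EndsWith v
          ([true] ++ reps [true, false] m ++ [false, false] ++ reps [false, true] k)) ∨
       (∃ m k, EndsWith v
          ([false, false] ++ reps [true, false] m ++ [false, false] ++ reps [false, true] k)) ∨
       (∃ k ≤ p - 1, v = reps [true, false] k ++ [false, false] ++ reps [false, true] (p - k - 1)))) ∧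
    PairwiseDisjoint4
      (∃ k, EndsWith v ([true, false] ++ reps [false, true] k))
      (∃ m k, EndsWith v
        ([true] ++ reps [true, false] m ++ [false, false] ++ reps [false, true] k))
      (∃ m k, EndsWith v
        ([false, false] ++ reps [true, false] m ++ [false, false] ++ reps [false, true] k))
      (∃ k ≤ p - 1, v = reps [true, false] k ++ [false, false] ++ reps [false, true] (p - k - 1)) := by
  have hEv : Even (v.reverse).length := by
    rw [List.length_reverse, hv]; exact ⟨p, two_mul p⟩
  have hL : (∃ k, EndsWith v ([false] ++ reps [false, true] k)) ↔ LP v.reverse := by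
    unfold LP
    exact exists_congr fun k => by rw [endsWith_iff, revL]
  have hA : (∃ k, EndsWith v ([true, false] ++ reps [false, true] k)) ↔ AP v.reverse := by
    unfold AP
    exact exists_congr fun k => by rw [endsWith_iff, revA]
  have hB : (∃ m k, EndsWith v
      ([true] ++ reps [true, false] m ++ [false, false] ++ reps [false, true] k)) ↔
      BP v.reverse := by
    unfold BP
    exact exists_congr fun m => exists_congr fun k => by rw [endsWith_iff, revB]
  have hC : (∃ m k, EndsWith v
      ([false, false] ++ reps [true, false] m ++ [false, false] ++ reps [false, true] k)) ↔
      CP v.reverse := by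
    unfold CP
    exact exists_congr fun m => exists_congr fun k => by rw [endsWith_iff, revC]
  have hD : (∃ k ≤ p - 1,
      v = reps [true, false] k ++ [false, false] ++ reps [false, true] (p - k - 1)) ↔
      DP v.reverse := by
    constructor
    · rintro ⟨k, hk, hveq⟩
      refine ⟨k, p - k - 1, ?_⟩
      rw [hveq]
      simp [reps_reverse]
    · rintro ⟨m, k', hr⟩
      have hlen := congrArg List.length hr
      rw [List.length_reverse, hv] at hlen
      simp [reps_length] at hlen
      have hk' : p - m - 1 = k' := by omega
      refine ⟨m, by omega, ?_⟩
      have hv' : v = (v.reverse).reverse := (List.reverse_reverse v).symm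
      rw [hv', hr, hk']
      simp [reps_reverse]
  constructor
  · rw [hL, hA, hB, hC, hD]
    constructor
    · exact fun h => completeness _ _ le_rfl hEv h
    · rintro (h | h | h | h)
      · exact AP_LP h
      · exact BP_LP h
      · exact CP_LP h
      · exact DP_LP h
  · unfold PairwiseDisjoint4
    rw [hA, hB, hC, hD]
    exact ⟨notAB, notAC, notAD, notBC, notBD, notCD⟩
end

section
/- For every p ≥ 3, the family ⟨1[10]^*⟩ of subsets of [2p] decomposes as the disjoint union ⟨11[01]^*⟩ ⊔ ⟨1[10]^*10[01]^*⟩ ⊔ ⟨00[10]^*01[01]^*⟩ ⊔ {[10]^k [01]^{p-k} : 0 ≤ k ≤ p-1}. -/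
lemma reps_zero (γ : List Bool) : reps γ 0 = [] := rfl

lemma reps_succ (γ : List Bool) (k : ℕ) : reps γ (k+1) = γ ++ reps γ k := by
  simp [reps, List.replicate_succ]

lemma reps_succ' (γ : List Bool) (k : ℕ) : reps γ (k+1) = reps γ k ++ γ := by
  simp [reps, List.replicate_succ']

lemma length_reps (x y : Bool) (k : ℕ) : (reps [x,y] k).length = 2*k := by
  induction k with
  | zero => simp [reps]
  | succ k ih => rw [reps_succ]; simp [ih]; omega

lemma reverse_reps (x y : Bool) (k : ℕ) : (reps [x,y] k).reverse = reps [y,x] k := by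
  induction k with
  | zero => rfl
  | succ k ih =>
    rw [reps_succ, List.reverse_append, ih, reps_succ']
    simp

lemma getD_reps (x y : Bool) (k i : ℕ) (h : i < 2*k) :
    (reps [x,y] k).getD i false = if i % 2 = 0 then x else y := by
  induction k generalizing i with
  | zero => omega
  | succ k ih =>
    rw [reps_succ]
    match i with
    | 0 => rfl
    | 1 => rfl
    | (i+2) =>
      show (x :: y :: reps [x,y] k).getD (i+2) false = _
      rw [List.getD_cons_succ, List.getD_cons_succ, ih i (by omega)]
      have h2 : (i+2) % 2 = i % 2 := by omega
      rw [h2]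

lemma prefix_iff_getD (s w : List Bool) :
    s <+: w ↔ s.length ≤ w.length ∧ ∀ i < s.length, w.getD i false = s.getD i false := by
  constructor
  · rintro ⟨t, rfl⟩
    refine ⟨by simp, fun i hi => ?_⟩
    rw [List.getD_append _ _ _ _ hi]
  · rintro ⟨h1, h2⟩
    have hs : s = w.take s.length := by
      apply List.ext_getElem
      · simp [h1]
      · intro i hi hi'
        have hh := h2 i hi
        rw [List.getD_eq_getElem _ _ (by omega : i < w.length), List.getD_eq_getElem _ _ hi] at hh
        simp [← hh]
    rw [hs]
    exact List.take_prefix _ _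

lemma parity_ne (i : ℕ) : decide (i % 2 = 1) ≠ decide (i % 2 = 0) := by
  rcases Nat.mod_two_eq_zero_or_one i with h|h <;> simp [h]

lemma flip_even (i : ℕ) (c : Bool) (h : ¬ c = decide (i % 2 = 1)) : c = decide (i % 2 = 0) := by
  rcases Nat.mod_two_eq_zero_or_one i with h2|h2 <;> rw [h2] at h ⊢ <;> simp_all

lemma flip_odd (i : ℕ) (c : Bool) (h : ¬ c = decide (i % 2 = 0)) : c = decide (i % 2 = 1) := by
  rcases Nat.mod_two_eq_zero_or_one i with h2|h2 <;> rw [h2] at h ⊢ <;> simp_all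

lemma getD_blocks (a c : ℕ) (r : List Bool) (i : ℕ) :
    ((reps [true,false] a ++ reps [false,true] c) ++ r).getD i false =
      if i < 2*a then decide (i % 2 = 0)
      else if i < 2*a + 2*c then decide (i % 2 = 1)
      else r.getD (i - (2*a + 2*c)) false := by
  by_cases h1 : i < 2*a
  · rw [List.getD_append _ _ _ _ (by simp [length_reps]; omega),
        List.getD_append _ _ _ _ (by rw [length_reps]; omega), getD_reps _ _ _ _ h1,
        if_pos h1]
    rcases Nat.mod_two_eq_zero_or_one i with h|h <;> simp [h]
  · by_cases h2 : i < 2*a + 2*c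
    · rw [List.getD_append _ _ _ _ (by simp [length_reps]; omega),
          List.getD_append_right _ _ _ _ (by rw [length_reps]; omega), length_reps,
          getD_reps _ _ _ _ (by omega), if_neg h1, if_pos h2]
      have hpar : (i - 2*a) % 2 = i % 2 := by omega
      rw [hpar]
      rcases Nat.mod_two_eq_zero_or_one i with h|h <;> simp [h]
    · rw [List.getD_append_right _ _ _ _ (by simp [length_reps]; omega), if_neg h1, if_neg h2]
      simp [length_reps]

lemma blocks_prefix_iff (w : List Bool) (a c : ℕ) (r : List Bool) :
    ((reps [true,false] a ++ reps [false,true] c) ++ r) <+: w ↔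
      (2*a + 2*c + r.length ≤ w.length ∧
       (∀ i, i < 2*a → w.getD i false = decide (i % 2 = 0)) ∧
       (∀ i, 2*a ≤ i → i < 2*a + 2*c → w.getD i false = decide (i % 2 = 1)) ∧
       (∀ j, j < r.length → w.getD (2*a + 2*c + j) false = r.getD j false)) := by
  rw [prefix_iff_getD]
  have hlen : ((reps [true,false] a ++ reps [false,true] c) ++ r).length = 2*a + 2*c + r.length := by
    simp [length_reps]; omega
  rw [hlen]
  constructor
  · rintro ⟨h1, h2⟩
    refine ⟨h1, fun i hi => ?_, fun i hi1 hi2 => ?_, fun j hj => ?_⟩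
    · rw [h2 i (by omega), getD_blocks, if_pos hi]
    · rw [h2 i (by omega), getD_blocks, if_neg (by omega), if_pos hi2]
    · rw [h2 _ (by omega), getD_blocks, if_neg (by omega), if_neg (by omega)]
      congr 1
      omega
  · rintro ⟨h1, hA, hB, hC⟩
    refine ⟨h1, fun i hi => ?_⟩
    rw [getD_blocks]
    split_ifs with g1 g2
    · exact hA i g1
    · exact hB i (by omega) g2
    · have hh := hC (i - (2*a+2*c)) (by omega)
      rw [← hh]
      congr 1
      omega

lemma eq_of_getD (s t : List Bool) (h1 : s.length = t.length)
    (h2 : ∀ i < s.length, s.getD i false = t.getD i false) : s = t := by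
  apply List.ext_getElem h1
  intro i hi1 hi2
  have hh := h2 i hi1
  rwa [List.getD_eq_getElem _ _ hi1, List.getD_eq_getElem _ _ hi2] at hh

lemma rev_patA (k : ℕ) : ([true, true] ++ reps [false, true] k).reverse
    = (reps [true,false] k ++ reps [false,true] 0) ++ [true, true] := by
  simp [reverse_reps, reps_zero]

lemma rev_patL (k : ℕ) : ([true] ++ reps [true, false] k).reverse
    = (reps [true,false] 0 ++ reps [false,true] k) ++ [true] := by
  simp [reverse_reps, reps_zero]

lemma rev_patB (m k : ℕ) :
    ([true] ++ reps [true, false] m ++ [true, false] ++ reps [false, true] k).reverse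
    = (reps [true,false] k ++ reps [false,true] (m+1)) ++ [true] := by
  simp [reverse_reps, reps_succ, List.append_assoc]

lemma rev_patC (m k : ℕ) :
    ([false, false] ++ reps [true, false] m ++ [false, true] ++ reps [false, true] k).reverse
    = (reps [true,false] (k+1) ++ reps [false,true] m) ++ [false, false] := by
  simp [reverse_reps, reps_succ', List.append_assoc]

lemma final_logic (p N M : ℕ) (hp : 3 ≤ p) (hN_le : N ≤ 2*p) (hM_le : M ≤ 2*p)
    (hNM : N < 2*p → N < M) (hMN2 : N = 2*p → M = 2*p) :
    ((0 < N ∨ (M < 2*p ∧ M % 2 = 0)) ↔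
      ((N < 2*p ∧ N % 2 = 1) ∨
       (N < 2*p ∧ N % 2 = 0 ∧ M < 2*p ∧ M % 2 = 0) ∨
       (0 < N ∧ N < 2*p ∧ N % 2 = 0 ∧ M < 2*p ∧ M % 2 = 1) ∨
       (0 < N ∧ N % 2 = 0 ∧ M = 2*p))) := by
  omega
lemma final_disj (p N M : ℕ) (hp : 3 ≤ p) :
    ¬((N < 2*p ∧ N % 2 = 1) ∧ (N < 2*p ∧ N % 2 = 0 ∧ M < 2*p ∧ M % 2 = 0)) ∧
    ¬((N < 2*p ∧ N % 2 = 1) ∧ (0 < N ∧ N < 2*p ∧ N % 2 = 0 ∧ M < 2*p ∧ M % 2 = 1)) ∧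
    ¬((N < 2*p ∧ N % 2 = 1) ∧ (0 < N ∧ N % 2 = 0 ∧ M = 2*p)) ∧
    ¬((N < 2*p ∧ N % 2 = 0 ∧ M < 2*p ∧ M % 2 = 0) ∧ (0 < N ∧ N < 2*p ∧ N % 2 = 0 ∧ M < 2*p ∧ M % 2 = 1)) ∧
    ¬((N < 2*p ∧ N % 2 = 0 ∧ M < 2*p ∧ M % 2 = 0) ∧ (0 < N ∧ N % 2 = 0 ∧ M = 2*p)) ∧
    ¬((0 < N ∧ N < 2*p ∧ N % 2 = 0 ∧ M < 2*p ∧ M % 2 = 1) ∧ (0 < N ∧ N % 2 = 0 ∧ M = 2*p)) := by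
  omega


/-- For every `p ≥ 3`, the family `⟨1[10]^*⟩` of subsets of `[2p]` decomposes as
the disjoint union
`⟨11[01]^*⟩ ⊔ ⟨1[10]^*10[01]^*⟩ ⊔ ⟨00[10]^*01[01]^*⟩ ⊔ {[10]^k [01]^{p-k} : 0 ≤ k ≤ p-1}`. -/
theorem decomposition_110 (p : ℕ) (hp : 3 ≤ p) (v : List Bool)
    (hv : v.length = 2 * p) :
    ((∃ k, EndsWith v ([true] ++ reps [true, false] k)) ↔
      ((∃ k, EndsWith v ([true, true] ++ reps [false, true] k)) ∨
       (∃ m k, EndsWith v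
          ([true] ++ reps [true, false] m ++ [true, false] ++ reps [false, true] k)) ∨
       (∃ m k, EndsWith v
          ([false, false] ++ reps [true, false] m ++ [false, true] ++ reps [false, true] k)) ∨
       (∃ k ≤ p - 1, v = reps [true, false] k ++ reps [false, true] (p - k)))) ∧
    PairwiseDisjoint4
      (∃ k, EndsWith v ([true, true] ++ reps [false, true] k))
      (∃ m k, EndsWith v
        ([true] ++ reps [true, false] m ++ [true, false] ++ reps [false, true] k))
      (∃ m k, EndsWith v
        ([false, false] ++ reps [true, false] m ++ [false, true] ++ reps [false, true] k))
      (∃ k ≤ p - 1, v = reps [true, false] k ++ reps [false, true] (p - k)) := by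
  set w := v.reverse with hwdef
  have hw : w.length = 2*p := by simp [hwdef, hv]
  have hvw : v = w.reverse := by simp [hwdef]
  have hEW : ∀ β : List Bool, EndsWith v β ↔ β.reverse <+: w := by
    intro β
    constructor
    · rintro ⟨γ, rfl⟩
      exact ⟨γ.reverse, by simp [hwdef]⟩
    · rintro ⟨t, ht⟩
      refine ⟨t.reverse, ?_⟩
      rw [hvw, ← ht]
      simp
  -- first mismatch against the 1010... pattern
  have hexN : ∃ i, i = 2*p ∨ w.getD i false = decide (i % 2 = 1) := ⟨2*p, Or.inl rfl⟩
  set N := Nat.find hexN with hNdef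
  have hN_le : N ≤ 2*p := Nat.find_le (Or.inl rfl)
  have hN_lt : ∀ i, i < N → w.getD i false = decide (i % 2 = 0) := by
    intro i hi
    have h := Nat.find_min hexN hi
    push_neg at h
    exact flip_even _ _ h.2
  have hN_spec : N = 2*p ∨ w.getD N false = decide (N % 2 = 1) := Nat.find_spec hexN
  -- first mismatch against the 0101... pattern, at or after N
  have hexM : ∃ i, i = 2*p ∨ (N ≤ i ∧ w.getD i false = decide (i % 2 = 0)) := ⟨2*p, Or.inl rfl⟩
  set M := Nat.find hexM with hMdef
  have hM_le : M ≤ 2*p := Nat.find_le (Or.inl rfl)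
  have hM_lt : ∀ i, N ≤ i → i < M → w.getD i false = decide (i % 2 = 1) := by
    intro i hNi hi
    have h := Nat.find_min hexM hi
    push_neg at h
    exact flip_odd _ _ (h.2 hNi)
  have hM_spec : M = 2*p ∨ (N ≤ M ∧ w.getD M false = decide (M % 2 = 0)) := Nat.find_spec hexM
  have hNM : N < 2*p → N < M := by
    intro h
    rcases hM_spec with h'|⟨h1, h2⟩
    · omega
    rcases hN_spec with h''|h''
    · omega
    rcases Nat.lt_or_ge N M with hlt|hge
    · exact hlt
    exfalso
    have hMN : M = N := by omega
    rw [hMN, h''] at h2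
    exact parity_ne N h2
  have hMN2 : N = 2*p → M = 2*p := by
    intro h
    rcases hM_spec with h'|⟨h1, h2⟩
    · exact h'
    · omega
  -- characterization of A
  have hA : (∃ k, EndsWith v ([true, true] ++ reps [false, true] k)) ↔
      (N < 2*p ∧ N % 2 = 1) := by
    constructor
    · rintro ⟨k, hE⟩
      rw [hEW, rev_patA k, blocks_prefix_iff] at hE
      obtain ⟨hl, h0, h1, h2⟩ := hE
      rw [hw] at hl
      simp only [List.length_cons, List.length_nil] at hl
      have e0 : w.getD (2*k) false = true := by
        have t := h2 0 (by norm_num)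
        rw [show 2*k + 2*0 + 0 = 2*k from by ring] at t
        exact t
      have e1 : w.getD (2*k+1) false = true := by
        have t := h2 1 (by norm_num)
        rw [show 2*k + 2*0 + 1 = 2*k+1 from by ring] at t
        exact t
      have hNval : N = 2*k+1 := by
        rw [hNdef]
        rw [Nat.find_eq_iff]
        constructor
        · refine Or.inr ?_
          rw [show (2*k+1) % 2 = 1 from by omega, e1]
          simp
        · intro j hj
          rintro (rfl | hbad)
          · omega
          · rcases Nat.lt_or_ge j (2*k) with hj2 | hj2
            · rw [h0 j hj2] at hbad
              exact parity_ne j hbad.symm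
            · have hj3 : j = 2*k := by omega
              rw [hj3, e0] at hbad
              have hb2 := of_decide_eq_true hbad.symm
              omega
      omega
    · rintro ⟨hlt, hodd⟩
      obtain ⟨k, hk⟩ : ∃ k, N = 2*k+1 := ⟨N/2, by omega⟩
      refine ⟨k, ?_⟩
      rw [hEW, rev_patA k, blocks_prefix_iff]
      refine ⟨?_, fun i hi => hN_lt i (by omega), fun i h1 h2 => absurd h2 (by omega),
        fun j hj => ?_⟩
      · rw [hw]
        simp only [List.length_cons, List.length_nil]
        omega
      · simp only [List.length_cons, List.length_nil] at hj
        interval_cases j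
        · rw [show 2*k + 2*0 + 0 = 2*k from by ring, hN_lt (2*k) (by omega),
            show (2*k) % 2 = 0 from by omega]
          simp
        · rw [show 2*k + 2*0 + 1 = N from by omega]
          rcases hN_spec with h'|h'
          · omega
          · rw [h', hodd]
            simp
  -- characterization of B
  have hB : (∃ m k, EndsWith v
        ([true] ++ reps [true, false] m ++ [true, false] ++ reps [false, true] k)) ↔
      (N < 2*p ∧ N % 2 = 0 ∧ M < 2*p ∧ M % 2 = 0) := by
    constructor
    · rintro ⟨m, k, hE⟩
      rw [hEW, rev_patB m k, blocks_prefix_iff] at hE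
      obtain ⟨hl, h0, h1, h2⟩ := hE
      rw [hw] at hl
      simp only [List.length_cons, List.length_nil] at hl
      have e2 : w.getD (2*k+2*m+2) false = true := by
        have t := h2 0 (by norm_num)
        rw [show 2*k + 2*(m+1) + 0 = 2*k+2*m+2 from by ring] at t
        exact t
      have hNval : N = 2*k := by
        rw [hNdef, Nat.find_eq_iff]
        constructor
        · exact Or.inr (h1 (2*k) le_rfl (by omega))
        · intro j hj
          rintro (rfl | hbad)
          · omega
          · rw [h0 j hj] at hbad
            exact parity_ne j hbad.symm
      have hMval : M = 2*k+2*m+2 := by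
        rw [hMdef, Nat.find_eq_iff]
        constructor
        · refine Or.inr ⟨by omega, ?_⟩
          rw [e2, show (2*k+2*m+2) % 2 = 0 from by omega]
          simp
        · intro j hj
          rintro (rfl | ⟨hNj, hbad⟩)
          · omega
          · have := h1 j (by omega) (by omega)
            rw [this] at hbad
            exact parity_ne j hbad
      omega
    · rintro ⟨h1, h2, h3, h4⟩
      have hNMlt : N < M := hNM h1
      obtain ⟨k, hk⟩ : ∃ k, N = 2*k := ⟨N/2, by omega⟩
      obtain ⟨m, hm⟩ : ∃ m, M = 2*k + 2*m + 2 := ⟨(M - N - 2)/2, by omega⟩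
      refine ⟨m, k, ?_⟩
      rw [hEW, rev_patB m k, blocks_prefix_iff]
      refine ⟨?_, fun i hi => hN_lt i (by omega), fun i hi1 hi2 => hM_lt i (by omega) (by omega),
        fun j hj => ?_⟩
      · rw [hw]
        simp only [List.length_cons, List.length_nil]
        omega
      · simp only [List.length_cons, List.length_nil] at hj
        interval_cases j
        rw [show 2*k + 2*(m+1) + 0 = M from by omega]
        rcases hM_spec with h'|⟨_, h'⟩
        · omega
        · rw [h', h4]
          simp
  -- characterization of C
  have hC : (∃ m k, EndsWith v
        ([false, false] ++ reps [true, false] m ++ [false, true] ++ reps [false, true] k)) ↔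
      (0 < N ∧ N < 2*p ∧ N % 2 = 0 ∧ M < 2*p ∧ M % 2 = 1) := by
    constructor
    · rintro ⟨m, k, hE⟩
      rw [hEW, rev_patC m k, blocks_prefix_iff] at hE
      obtain ⟨hl, h0, h1, h2⟩ := hE
      rw [hw] at hl
      simp only [List.length_cons, List.length_nil] at hl
      have e0 : w.getD (2*k+2*m+2) false = false := by
        have t := h2 0 (by norm_num)
        rw [show 2*(k+1) + 2*m + 0 = 2*k+2*m+2 from by ring] at t
        exact t
      have e1 : w.getD (2*k+2*m+3) false = false := by
        have t := h2 1 (by norm_num)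
        rw [show 2*(k+1) + 2*m + 1 = 2*k+2*m+3 from by ring] at t
        exact t
      have hNval : N = 2*k+2 := by
        rw [hNdef, Nat.find_eq_iff]
        constructor
        · refine Or.inr ?_
          rcases Nat.eq_zero_or_pos m with hm0 | hm0
          · subst hm0
            rw [show 2*k+2 = 2*k+2*0+2 from by ring] at e0 ⊢
            rw [e0, show (2*k+2*0+2) % 2 = 0 from by omega]
            simp
          · exact h1 (2*k+2) (by omega) (by omega)
        · intro j hj
          rintro (rfl | hbad)
          · omega
          · rw [h0 j (by omega)] at hbad
            exact parity_ne j hbad.symm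
      have hMval : M = 2*k+2*m+3 := by
        rw [hMdef, Nat.find_eq_iff]
        constructor
        · refine Or.inr ⟨by omega, ?_⟩
          rw [e1, show (2*k+2*m+3) % 2 = 1 from by omega]
          simp
        · intro j hj
          rintro (rfl | ⟨hNj, hbad⟩)
          · omega
          · rcases Nat.lt_or_ge j (2*k+2*m+2) with hj2 | hj2
            · have := h1 j (by omega) (by omega)
              rw [this] at hbad
              exact parity_ne j hbad
            · have hj3 : j = 2*k+2*m+2 := by omega
              rw [hj3, e0, show (2*k+2*m+2) % 2 = 0 from by omega] at hbad
              simp at hbad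
      omega
    · rintro ⟨h0, h1, h2, h3, h4⟩
      have hNMlt : N < M := hNM h1
      obtain ⟨k, hk⟩ : ∃ k, N = 2*k+2 := ⟨N/2 - 1, by omega⟩
      obtain ⟨m, hm⟩ : ∃ m, M = 2*k + 2*m + 3 := ⟨(M - N - 1)/2, by omega⟩
      refine ⟨m, k, ?_⟩
      rw [hEW, rev_patC m k, blocks_prefix_iff]
      refine ⟨?_, fun i hi => hN_lt i (by omega), fun i hi1 hi2 => hM_lt i (by omega) (by omega),
        fun j hj => ?_⟩
      · rw [hw]
        simp only [List.length_cons, List.length_nil]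
        omega
      · simp only [List.length_cons, List.length_nil] at hj
        interval_cases j
        · rw [show 2*(k+1) + 2*m + 0 = 2*k+2*m+2 from by ring,
            hM_lt (2*k+2*m+2) (by omega) (by omega),
            show (2*k+2*m+2) % 2 = 0 from by omega]
          simp
        · rw [show 2*(k+1) + 2*m + 1 = M from by omega]
          rcases hM_spec with h'|⟨_, h'⟩
          · omega
          · rw [h', show M % 2 = 1 from by omega]
            simp
  -- characterization of D
  have hD : (∃ k ≤ p - 1, v = reps [true, false] k ++ reps [false, true] (p - k)) ↔
      (0 < N ∧ N % 2 = 0 ∧ M = 2*p) := by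
    constructor
    · rintro ⟨k, hk, hveq⟩
      have hpre : (reps [true,false] (p-k) ++ reps [false,true] k) ++ ([] : List Bool) <+: w := by
        refine ⟨[], ?_⟩
        rw [List.append_nil, List.append_nil, hwdef, hveq]
        simp [reverse_reps]
      rw [blocks_prefix_iff] at hpre
      obtain ⟨hl, h0, h1, _⟩ := hpre
      rcases Nat.eq_zero_or_pos k with hk0 | hk0
      · subst hk0
        have hNval : N = 2*p := by
          rw [hNdef, Nat.find_eq_iff]
          refine ⟨Or.inl rfl, fun j hj => ?_⟩
          rintro (rfl | hbad)
          · omega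
          · rw [h0 j (by omega)] at hbad
            exact parity_ne j hbad.symm
        exact ⟨by omega, by omega, hMN2 hNval⟩
      · have hNval : N = 2*(p-k) := by
          rw [hNdef, Nat.find_eq_iff]
          constructor
          · exact Or.inr (h1 (2*(p-k)) le_rfl (by omega))
          · intro j hj
            rintro (rfl | hbad)
            · omega
            · rw [h0 j hj] at hbad
              exact parity_ne j hbad.symm
        have hMval : M = 2*p := by
          rw [hMdef, Nat.find_eq_iff]
          refine ⟨Or.inl rfl, fun j hj => ?_⟩
          rintro (rfl | ⟨hNj, hbad⟩)
          · omega
          · have := h1 j (by omega) (by omega)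
            rw [this] at hbad
            exact parity_ne j hbad
        exact ⟨by omega, by omega, hMval⟩
    · rintro ⟨h0, h1, h2⟩
      by_cases hN2p : N = 2*p
      · refine ⟨0, by omega, ?_⟩
        have hwe : w = reps [true,false] p := by
          apply eq_of_getD
          · rw [hw, length_reps]
          · intro i hi
            rw [hw] at hi
            rw [hN_lt i (by omega), getD_reps _ _ _ _ hi]
            rcases Nat.mod_two_eq_zero_or_one i with h|h <;> simp [h]
        rw [hvw, hwe, reverse_reps]
        simp [reps_zero]
      · obtain ⟨a, ha⟩ : ∃ a, N = 2*a := ⟨N/2, by omega⟩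
        refine ⟨p - a, by omega, ?_⟩
        have hpa : p - (p - a) = a := by omega
        rw [hpa]
        have hwe : w = (reps [true,false] a ++ reps [false,true] (p - a)) ++ ([] : List Bool) := by
          apply eq_of_getD
          · rw [hw]
            simp [length_reps]
            omega
          · intro i hi
            rw [hw] at hi
            rw [getD_blocks]
            split_ifs with g1 g2
            · exact hN_lt i (by omega)
            · exact hM_lt i (by omega) (by omega)
            · exfalso
              omega
        rw [hvw, hwe]
        simp [reverse_reps]
  -- characterization of the left-hand side
  have hL : (∃ k, EndsWith v ([true] ++ reps [true, false] k)) ↔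
      (0 < N ∨ (M < 2*p ∧ M % 2 = 0)) := by
    constructor
    · rintro ⟨k, hE⟩
      rw [hEW, rev_patL k, blocks_prefix_iff] at hE
      obtain ⟨hl, h0, h1, h2⟩ := hE
      rw [hw] at hl
      simp only [List.length_cons, List.length_nil] at hl
      have e0 : w.getD (2*k) false = true := by
        have t := h2 0 (by norm_num)
        rw [show 2*0 + 2*k + 0 = 2*k from by ring] at t
        exact t
      rcases Nat.eq_zero_or_pos N with hN0 | hN0
      · right
        have hMval : M = 2*k := by
          rw [hMdef, Nat.find_eq_iff]
          constructor
          · refine Or.inr ⟨by omega, ?_⟩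
            rw [e0, show (2*k) % 2 = 0 from by omega]
            simp
          · intro j hj
            rintro (rfl | ⟨hNj, hbad⟩)
            · omega
            · have := h1 j (by omega) (by omega)
              rw [this] at hbad
              exact parity_ne j hbad
        omega
      · exact Or.inl hN0
    · have hcase1 : 0 < N → ∃ k, EndsWith v ([true] ++ reps [true, false] k) := by
        intro h0N
        refine ⟨0, ?_⟩
        rw [hEW, rev_patL 0, blocks_prefix_iff]
        refine ⟨?_, fun i hi => absurd hi (by omega), fun i hi1 hi2 => absurd hi2 (by omega),
          fun j hj => ?_⟩
        · rw [hw]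
          simp only [List.length_cons, List.length_nil]
          omega
        · simp only [List.length_cons, List.length_nil] at hj
          interval_cases j
          rw [show 2*0 + 2*0 + 0 = 0 from by ring, hN_lt 0 h0N]
          simp
      rintro (h0N | ⟨h1, h2⟩)
      · exact hcase1 h0N
      · rcases Nat.eq_zero_or_pos N with hN0 | hN0
        swap
        · exact hcase1 hN0
        obtain ⟨k, hk⟩ : ∃ k, M = 2*k := ⟨M/2, by omega⟩
        refine ⟨k, ?_⟩
        rw [hEW, rev_patL k, blocks_prefix_iff]
        refine ⟨?_, fun i hi => absurd hi (by omega), ?_, fun j hj => ?_⟩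
        · rw [hw]
          simp only [List.length_cons, List.length_nil]
          omega
        · intro i hi1 hi2
          exact hM_lt i (by omega) (by omega)
        · simp only [List.length_cons, List.length_nil] at hj
          interval_cases j
          rw [show 2*0 + 2*k + 0 = M from by omega]
          rcases hM_spec with h'|⟨_, h'⟩
          · omega
          · rw [h', h2]
            simp
  clear_value N M
  clear hNdef hMdef hN_lt hN_spec hM_lt hM_spec hexM hexN hEW hvw hw hwdef hv
  refine ⟨?_, ?_⟩
  · rw [hL, hA, hB, hC, hD]
    exact final_logic p N M hp hN_le hM_le hNM hMN2
  · unfold PairwiseDisjoint4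
    rw [hA, hB, hC, hD]
    exact final_disj p N M hp
end

section
/- For any integer n ≥ 5 and any 0 ≤ t ≤ n-1, there exists a bijection Φ_t^n from C^n_t ∩ ⟨0[01]^*⟩ to C^n_{t+1} ∩ ⟨1[10]^*⟩ such that S ⊆ Φ_t^n(S) for every S in the domain; in particular |Φ_t^n(S)| = |S| + 1 and Φ_t^n(S) is obtained from S by adding one element. -/
/-- Pointwise order on support vectors: `v ≤ w` iff every element of the subset
encoded by `v` belongs to the subset encoded by `w`. -/
def vle (v w : List Bool) : Prop :=
  ∀ i : ℕ, v.getD i false = true → w.getD i false = true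

/- ### Auxiliary machinery on reversed strings -/

/-- `goodA r` iff `r` starts with `(10)^k 0` for some `k`
(i.e. the original string ends with `0(01)^k`). -/
def goodA : List Bool → Bool
  | true :: false :: r => goodA r
  | false :: _ => true
  | _ => false

/-- `goodB r` iff `r` starts with `(01)^k 1` for some `k`. -/
def goodB : List Bool → Bool
  | false :: true :: r => goodB r
  | true :: _ => true
  | _ => false

/-- The bijection on reversed strings. -/
def phi : List Bool → List Bool
  | true :: false :: r => true :: false :: phi r
  | false :: false :: s => if goodB s then false :: true :: s else true :: false :: s
  | false :: u => true :: u
  | r => r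

/-- The inverse bijection on reversed strings. -/
def psi : List Bool → List Bool
  | true :: false :: s => if goodB s then true :: false :: psi s else false :: false :: s
  | true :: true :: s => false :: true :: s
  | [true] => [false]
  | false :: true :: s => false :: false :: s
  | w => w

lemma reps_reverse (a b : Bool) (k : ℕ) :
    (reps [a,b] k).reverse = reps [b,a] k := by
  induction k with
  | zero => rfl
  | succ k ih => rw [reps_succ, List.reverse_append, ih, reps_succ']; simp

lemma rev_flip (x y : List Bool) (b : Bool) :
    (x ++ b :: y).reverse = y.reverse ++ b :: x.reverse := by simp

lemma goodA_reps (k : ℕ) (s : List Bool) :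
    goodA (reps [true, false] k ++ false :: s) = true := by
  induction k with
  | zero => simp [reps_zero, goodA]
  | succ k ih => rw [reps_succ]; simpa [goodA] using ih

lemma goodB_reps (k : ℕ) (s : List Bool) :
    goodB (reps [false, true] k ++ true :: s) = true := by
  induction k with
  | zero => simp [reps_zero, goodB]
  | succ k ih => rw [reps_succ]; simpa [goodB] using ih

lemma goodA_cases (r : List Bool) (h : goodA r = true) :
    (∃ s, r = false :: s) ∨ ∃ s, r = true :: false :: s ∧ goodA s = true := by
  match r with
  | [] => simp [goodA] at h
  | false :: s => exact Or.inl ⟨s, rfl⟩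
  | [true] => simp [goodA] at h
  | true :: true :: s => simp [goodA] at h
  | true :: false :: s => exact Or.inr ⟨s, rfl, by simpa [goodA] using h⟩

lemma goodB_cases (r : List Bool) (h : goodB r = true) :
    (∃ s, r = true :: s) ∨ ∃ s, r = false :: true :: s ∧ goodB s = true := by
  match r with
  | [] => simp [goodB] at h
  | true :: s => exact Or.inl ⟨s, rfl⟩
  | [false] => simp [goodB] at h
  | false :: false :: s => simp [goodB] at h
  | false :: true :: s => exact Or.inr ⟨s, rfl, by simpa [goodB] using h⟩

lemma goodA_exists (r : List Bool) (h : goodA r = true) :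
    ∃ k s, r = reps [true, false] k ++ false :: s := by
  induction r using goodA.induct with
  | case1 r ih =>
    rw [goodA] at h
    obtain ⟨k, s, hks⟩ := ih h
    exact ⟨k + 1, s, by rw [reps_succ, hks]; simp⟩
  | case2 u => exact ⟨0, u, by simp [reps_zero]⟩
  | case3 r h1 h2 =>
    rcases goodA_cases r h with ⟨s, rfl⟩ | ⟨s, rfl, -⟩
    · exact absurd rfl (h2 s)
    · exact absurd rfl (h1 s)

lemma goodB_exists (r : List Bool) (h : goodB r = true) :
    ∃ k s, r = reps [false, true] k ++ true :: s := by
  induction r using goodB.induct with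
  | case1 r ih =>
    rw [goodB] at h
    obtain ⟨k, s, hks⟩ := ih h
    exact ⟨k + 1, s, by rw [reps_succ, hks]; simp⟩
  | case2 u => exact ⟨0, u, by simp [reps_zero]⟩
  | case3 r h1 h2 =>
    rcases goodB_cases r h with ⟨s, rfl⟩ | ⟨s, rfl, -⟩
    · exact absurd rfl (h2 s)
    · exact absurd rfl (h1 s)

/-- Membership in the domain in terms of `goodA` of the reverse. -/
lemma memA_iff (v : List Bool) :
    (∃ k, EndsWith v ([false] ++ reps [false, true] k)) ↔ goodA v.reverse = true := by
  constructor
  · rintro ⟨k, γ, hv⟩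
    subst hv
    rw [show γ ++ ([false] ++ reps [false, true] k) = (γ ++ [false]) ++ reps [false, true] k
      by simp, List.reverse_append, reps_reverse, List.reverse_append]
    simpa using goodA_reps k γ.reverse
  · intro h
    obtain ⟨k, s, hks⟩ := goodA_exists v.reverse h
    refine ⟨k, ⟨s.reverse, ?_⟩⟩
    have := congrArg List.reverse hks
    rw [List.reverse_reverse] at this
    rw [this, List.reverse_append, reps_reverse]
    simp

/-- Membership in the codomain in terms of `goodB` of the reverse. -/
lemma memB_iff (v : List Bool) :
    (∃ k, EndsWith v ([true] ++ reps [true, false] k)) ↔ goodB v.reverse = true := by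
  constructor
  · rintro ⟨k, γ, hv⟩
    subst hv
    rw [show γ ++ ([true] ++ reps [true, false] k) = (γ ++ [true]) ++ reps [true, false] k
      by simp, List.reverse_append, reps_reverse, List.reverse_append]
    simpa using goodB_reps k γ.reverse
  · intro h
    obtain ⟨k, s, hks⟩ := goodB_exists v.reverse h
    refine ⟨k, ⟨s.reverse, ?_⟩⟩
    have := congrArg List.reverse hks
    rw [List.reverse_reverse] at this
    rw [this, List.reverse_append, reps_reverse]
    simp

/-- `phi` flips exactly one `false` to `true`. -/
lemma phi_flip (r : List Bool) (h : goodA r = true) :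
    ∃ x y, r = x ++ false :: y ∧ phi r = x ++ true :: y := by
  induction r using phi.induct with
  | case1 r ih =>
    rw [goodA] at h
    obtain ⟨x, y, h1, h2⟩ := ih h
    exact ⟨true :: false :: x, y, by simp [h1], by rw [phi, h2]; simp⟩
  | case2 s hs => exact ⟨[false], s, rfl, by rw [phi, if_pos hs]; rfl⟩
  | case3 s hs => exact ⟨[], false :: s, rfl, by rw [phi, if_neg hs]; rfl⟩
  | case4 u hu =>
    match u, hu with
    | [], _ => exact ⟨[], [], rfl, rfl⟩
    | true :: s, _ => exact ⟨[], true :: s, rfl, rfl⟩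
    | false :: s, hu => exact absurd rfl (hu s)
  | case5 r h1 h2 h3 =>
    rcases goodA_cases r h with ⟨s, rfl⟩ | ⟨s, rfl, -⟩
    · exact absurd rfl (h3 s)
    · exact absurd rfl (h1 s)

/-- `psi` flips exactly one `true` to `false`. -/
lemma psi_flip (w : List Bool) (h : goodB w = true) :
    ∃ x y, w = x ++ true :: y ∧ psi w = x ++ false :: y := by
  induction w using psi.induct with
  | case1 s hs ih =>
    obtain ⟨x, y, h1, h2⟩ := ih hs
    exact ⟨true :: false :: x, y, by simp [h1], by rw [psi, if_pos hs, h2]; simp⟩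
  | case2 s hs => exact ⟨[], false :: s, rfl, by rw [psi, if_neg hs]; rfl⟩
  | case3 s => exact ⟨[], true :: s, rfl, rfl⟩
  | case4 => exact ⟨[], [], rfl, rfl⟩
  | case5 s => exact ⟨[false], s, rfl, rfl⟩
  | case6 w h1 h2 h3 h4 =>
    rcases goodB_cases w h with ⟨s, rfl⟩ | ⟨s, rfl, -⟩
    · match s, h1, h2, h3 with
      | [], _, _, h3 => exact absurd rfl h3
      | true :: s, _, h2, _ => exact absurd rfl (h2 s)
      | false :: s, h1, _, _ => exact absurd rfl (h1 s)
    · exact absurd rfl (h4 s)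

lemma goodB_phi (r : List Bool) (h : goodA r = true) : goodB (phi r) = true := by
  induction r using phi.induct with
  | case1 r ih => rw [phi]; rfl
  | case2 s hs => rw [phi, if_pos hs]; simpa [goodB] using hs
  | case3 s hs => rw [phi, if_neg hs]; rfl
  | case4 u hu =>
    match u, hu with
    | [], _ => rfl
    | true :: s, _ => rfl
    | false :: s, hu => exact absurd rfl (hu s)
  | case5 r h1 h2 h3 =>
    rcases goodA_cases r h with ⟨s, rfl⟩ | ⟨s, rfl, -⟩
    · exact absurd rfl (h3 s)
    · exact absurd rfl (h1 s)

lemma goodA_psi (w : List Bool) (h : goodB w = true) : goodA (psi w) = true := by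
  induction w using psi.induct with
  | case1 s hs ih =>
    rw [psi, if_pos hs]
    simpa [goodA] using ih hs
  | case2 s hs => rw [psi, if_neg hs]; rfl
  | case3 s => rfl
  | case4 => rfl
  | case5 s => rfl
  | case6 w h1 h2 h3 h4 =>
    rcases goodB_cases w h with ⟨s, rfl⟩ | ⟨s, rfl, -⟩
    · match s, h1, h2, h3 with
      | [], _, _, h3 => exact absurd rfl h3
      | true :: s, _, h2, _ => exact absurd rfl (h2 s)
      | false :: s, h1, _, _ => exact absurd rfl (h1 s)
    · exact absurd rfl (h4 s)

lemma psi_phi (r : List Bool) (h : goodA r = true) : psi (phi r) = r := by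
  induction r using phi.induct with
  | case1 r ih =>
    rw [goodA] at h
    rw [phi, psi, if_pos (goodB_phi r h), ih h]
  | case2 s hs => rw [phi, if_pos hs]; rfl
  | case3 s hs => rw [phi, if_neg hs, psi, if_neg hs]
  | case4 u hu =>
    match u, hu with
    | [], _ => rfl
    | true :: s, _ => rfl
    | false :: s, hu => exact absurd rfl (hu s)
  | case5 r h1 h2 h3 =>
    rcases goodA_cases r h with ⟨s, rfl⟩ | ⟨s, rfl, -⟩
    · exact absurd rfl (h3 s)
    · exact absurd rfl (h1 s)

lemma phi_psi (w : List Bool) (h : goodB w = true) : phi (psi w) = w := by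
  induction w using psi.induct with
  | case1 s hs ih =>
    rw [psi, if_pos hs, phi, ih hs]
  | case2 s hs => rw [psi, if_neg hs, phi, if_neg hs]
  | case3 s => rfl
  | case4 => rfl
  | case5 s =>
    have hs : goodB s = true := by simpa [goodB] using h
    rw [psi, phi, if_pos hs]
  | case6 w h1 h2 h3 h4 =>
    rcases goodB_cases w h with ⟨s, rfl⟩ | ⟨s, rfl, -⟩
    · match s, h1, h2, h3 with
      | [], _, _, h3 => exact absurd rfl h3
      | true :: s, _, h2, _ => exact absurd rfl (h2 s)
      | false :: s, h1, _, _ => exact absurd rfl (h1 s)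
    · exact absurd rfl (h4 s)

lemma vle_flip (a c : List Bool) : vle (a ++ false :: c) (a ++ true :: c) := by
  induction a with
  | nil =>
    intro i hi
    cases i with
    | zero => simp at hi
    | succ j => simpa using hi
  | cons h a ih =>
    intro i hi
    cases i with
    | zero => simpa using hi
    | succ j => simpa using ih j (by simpa using hi)

/-- For any `n ≥ 5` and `0 ≤ t ≤ n-1`, there is a bijection
`Φ : C^n_t ∩ ⟨0[01]^*⟩ → C^n_{t+1} ∩ ⟨1[10]^*⟩` such that `S ⊆ Φ(S)` for all `S`
in the domain; as the cardinalities differ by one, `Φ(S)` is obtained from `S`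
by adding a single element. -/
theorem exists_Phi (n t : ℕ) (hn : 5 ≤ n) (ht : t ≤ n - 1) :
    ∃ Φ : List Bool → List Bool,
      Set.BijOn Φ
        {v | v.length = n ∧ v.count true = t ∧
          ∃ k, EndsWith v ([false] ++ reps [false, true] k)}
        {v | v.length = n ∧ v.count true = t + 1 ∧
          ∃ k, EndsWith v ([true] ++ reps [true, false] k)} ∧
      ∀ v, v.length = n → v.count true = t →
        (∃ k, EndsWith v ([false] ++ reps [false, true] k)) → vle v (Φ v) := by
  refine ⟨fun v => (phi v.reverse).reverse, ⟨?_, ?_, ?_⟩, ?_⟩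
  · -- MapsTo
    rintro v ⟨hlen, hcnt, hA⟩
    have hg : goodA v.reverse = true := (memA_iff v).mp hA
    obtain ⟨x, y, h1, h2⟩ := phi_flip v.reverse hg
    simp only [Set.mem_setOf_eq]
    refine ⟨?_, ?_, ?_⟩
    · have hl : v.reverse.length = n := by simpa using hlen
      rw [h1] at hl
      rw [h2]
      simp only [List.length_reverse, List.length_append, List.length_cons] at hl ⊢
      omega
    · have hc : v.reverse.count true = t := by rw [List.count_reverse]; exact hcnt
      rw [h1] at hc
      rw [h2]
      simp [List.count_append, List.count_cons] at hc ⊢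
      omega
    · rw [memB_iff, List.reverse_reverse]
      exact goodB_phi v.reverse hg
  · -- InjOn
    rintro v1 ⟨_, _, hA1⟩ v2 ⟨_, _, hA2⟩ heq
    have h1 : goodA v1.reverse = true := (memA_iff v1).mp hA1
    have h2 : goodA v2.reverse = true := (memA_iff v2).mp hA2
    have : phi v1.reverse = phi v2.reverse := by
      have := congrArg List.reverse heq
      simpa using this
    have : v1.reverse = v2.reverse := by
      rw [← psi_phi v1.reverse h1, ← psi_phi v2.reverse h2, this]
    simpa using congrArg List.reverse this
  · -- SurjOn
    rintro w ⟨hlen, hcnt, hB⟩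
    have hg : goodB w.reverse = true := (memB_iff w).mp hB
    obtain ⟨x, y, h1, h2⟩ := psi_flip w.reverse hg
    refine ⟨(psi w.reverse).reverse, ⟨⟨?_, ?_, ?_⟩, ?_⟩⟩
    · have hl : w.reverse.length = n := by simpa using hlen
      rw [h1] at hl
      rw [h2]
      simp only [List.length_reverse, List.length_append, List.length_cons] at hl ⊢
      omega
    · have hc : w.reverse.count true = t + 1 := by rw [List.count_reverse]; exact hcnt
      rw [h1] at hc
      rw [h2]
      simp [List.count_append, List.count_cons] at hc ⊢
      omega
    · rw [memA_iff, List.reverse_reverse]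
      exact goodA_psi w.reverse hg
    · simp only [List.reverse_reverse]
      rw [phi_psi w.reverse hg, List.reverse_reverse]
  · -- vle
    intro v _ _ hA
    have hg : goodA v.reverse = true := (memA_iff v).mp hA
    obtain ⟨x, y, h1, h2⟩ := phi_flip v.reverse hg
    have hv : v = y.reverse ++ false :: x.reverse := by
      have := congrArg List.reverse h1
      rw [List.reverse_reverse, rev_flip] at this
      exact this
    have hw : (phi v.reverse).reverse = y.reverse ++ true :: x.reverse := by
      rw [h2, rev_flip]
    show vle v ((phi v.reverse).reverse)
    rw [hw, hv]
    exact vle_flip _ _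
end

section
/- The binomial Diophantine equation x_1·C(n,1) + x_2·C(n,2) + ... + x_{n-1}·C(n,n-1) = 1 has an integer solution if and only if n is not a prime power. -/
open Nat Finset

/-- Bezout for finsets: the gcd is an integer linear combination. -/
lemma finset_bezout (s : Finset ℕ) (f : ℕ → ℕ) :
    ∃ x : ℕ → ℤ, ∑ k ∈ s, x k * (f k : ℤ) = ((Finset.gcd s f : ℕ) : ℤ) := by
  classical
  induction s using Finset.induction_on with
  | empty => exact ⟨0, by simp⟩
  | @insert a s ha ih =>
    obtain ⟨x, hx⟩ := ih
    refine ⟨fun k => if k = a then Nat.gcdA (f a) (s.gcd f) else Nat.gcdB (f a) (s.gcd f) * x k,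
      ?_⟩
    rw [Finset.gcd_insert, Finset.sum_insert ha]
    have h2 : ∑ k ∈ s, (if k = a then Nat.gcdA (f a) (s.gcd f)
        else Nat.gcdB (f a) (s.gcd f) * x k) * (f k : ℤ)
        = Nat.gcdB (f a) (s.gcd f) * ∑ k ∈ s, x k * (f k : ℤ) := by
      rw [Finset.mul_sum]
      refine Finset.sum_congr rfl fun k hk => ?_
      rw [if_neg (by rintro rfl; exact ha hk), mul_assoc]
    have hgg : (GCDMonoid.gcd (f a) (s.gcd f)) = Nat.gcd (f a) (s.gcd f) := rfl
    simp only [h2, hx, if_pos rfl, hgg, if_true]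
    rw [Nat.gcd_eq_gcd_ab]
    ring

/-- If `n ≥ 2` is not a prime power, the gcd of the middle binomial coefficients is `1`. -/
lemma not_prime_pow_gcd (n : ℕ) (hn : 2 ≤ n) (h : ¬ IsPrimePow n) :
    (Finset.Ico 1 n).gcd (fun k => n.choose k) = 1 := by
  by_contra hg
  obtain ⟨p, hp, hpd⟩ := Nat.exists_prime_and_dvd hg
  have hdvd : ∀ k ∈ Finset.Ico 1 n, p ∣ n.choose k := fun k hk =>
    hpd.trans (Finset.gcd_dvd hk)
  have h1n : (1 : ℕ) ∈ Finset.Ico 1 n := by simp [Finset.mem_Ico]; omega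
  have hpn : p ∣ n := by simpa using hdvd 1 h1n
  obtain ⟨a, ha⟩ : ∃ a, a = n.factorization p := ⟨_, rfl⟩
  have ha1 : 1 ≤ a := ha ▸ (Nat.Prime.dvd_iff_one_le_factorization hp (by omega)).mp hpn
  have hpa : p ^ a ∣ n := ha ▸ Nat.ordProj_dvd n p
  obtain ⟨m, hm⟩ : ∃ m, m = n / p ^ a := ⟨_, rfl⟩
  have hnm : n = p ^ a * m := by rw [hm, Nat.mul_div_cancel' hpa]
  have hpm : ¬ p ∣ m := by
    rw [hm, ha]
    exact Nat.not_dvd_ordCompl hp (by omega)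
  have hm1 : m ≠ 1 := by
    rintro rfl
    exact h ⟨p, a, hp.prime, by omega, by omega⟩
  have hm0 : m ≠ 0 := by rintro rfl; omega
  have hp1 : 1 ≤ p ^ a := Nat.one_le_pow _ _ hp.pos
  have hm2 : 2 ≤ m := by omega
  have hpalt : p ^ a < n := by nlinarith
  have hmem : p ^ a ∈ Finset.Ico 1 n := Finset.mem_Ico.mpr ⟨hp1, hpalt⟩
  have hchoose : p ∣ n.choose (p ^ a) := hdvd _ hmem
  haveI : Fact p.Prime := ⟨hp⟩
  have lucas := Choose.choose_modEq_choose_mul_prod_range_choose (n := n) (k := p ^ a) (p := p) a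
  have hk1 : p ^ a / p ^ a = 1 := Nat.div_self (pow_pos hp.pos _)
  have hprod : ∀ i ∈ Finset.range a, (n / p ^ i % p).choose (p ^ a / p ^ i % p) = 1 := by
    intro i hi
    have hia : i < a := Finset.mem_range.mp hi
    have hdiv : p ^ a / p ^ i = p ^ (a - i) := Nat.pow_div (by omega) hp.pos
    have hz : p ^ a / p ^ i % p = 0 := by
      rw [hdiv]
      exact Nat.mod_eq_zero_of_dvd (dvd_pow_self p (by omega))
    rw [hz, Nat.choose_zero_right]
  have hchm : (n / p ^ a).choose (p ^ a / p ^ a) = m := by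
    rw [hk1, Nat.choose_one_right, ← hm]
  rw [Finset.prod_congr rfl hprod, Finset.prod_const_one, hchm] at lucas
  simp only [Nat.cast_one, mul_one] at lucas
  -- lucas : (n.choose (p ^ a) : ℤ) ≡ m [ZMOD p]
  have hdvdm : (p : ℤ) ∣ (m : ℤ) := by
    have h1 : (p : ℤ) ∣ ((m : ℤ) - (n.choose (p ^ a) : ℤ)) := lucas.dvd
    have h2 : (p : ℤ) ∣ (n.choose (p ^ a) : ℤ) := Int.natCast_dvd_natCast.mpr hchoose
    have := dvd_add h1 h2
    simpa using this
  exact hpm (Int.natCast_dvd_natCast.mp hdvdm)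

/-- The binomial Diophantine equation
`x_1·C(n,1) + x_2·C(n,2) + ... + x_{n-1}·C(n,n-1) = 1` has an integer solution
if and only if `n` is not a prime power. -/
theorem binomial_diophantine_solvable (n : ℕ) (hn : 2 ≤ n) :
    (∃ x : ℕ → ℤ, ∑ k ∈ Finset.Ico 1 n, x k * (n.choose k : ℤ) = 1) ↔
      ¬ IsPrimePow n := by
  constructor
  · rintro ⟨x, hx⟩ ⟨p, m, hp, hm, rfl⟩
    have hdvd : (p : ℤ) ∣ 1 := by
      rw [← hx]
      refine Finset.dvd_sum fun k hk => ?_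
      rw [Finset.mem_Ico] at hk
      have : p ∣ (p ^ m).choose k := hp.nat_prime.dvd_choose_pow (by omega) (by omega)
      exact Dvd.dvd.mul_left (Int.natCast_dvd_natCast.mpr this) _
    have := Int.le_of_dvd one_pos hdvd
    have := hp.nat_prime.two_le
    omega
  · intro h
    obtain ⟨x, hx⟩ := finset_bezout (Finset.Ico 1 n) (fun k => n.choose k)
    exact ⟨x, by rw [hx, not_prime_pow_gcd n hn h]; norm_num⟩
end
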